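/- arXiv:2310.08894 — 5 statements merged into one kernel-verified Lean document; each statement's English description precedes it below -/
import Mathlib

section
/- Fix K, r, n with K ≥ rn, and fix an element k ∈ [K]. The number of r-spread (cyclically) subsets J ⊆ [K] of size n containing k equals C(K - (r-1)n - 1, n - 1). -/
/-- The representative of `a` mod `K` in `{1, ..., K}`. -/
def cyc (K : ℕ) (a : ℤ) : ℤ := (a - 1) % (K : ℤ) + 1

/-- `J ⊆ [K]` is `r`-spread (cyclically): all pairs of distinct elements have
both cyclic distances at least `r`. -/
def rSpread (K r : ℕ) (J : Finset ℕ) : Prop :=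
  J ⊆ Finset.Icc 1 K ∧ ∀ j ∈ J, ∀ j' ∈ J, j ≠ j' →
    (r : ℤ) ≤ cyc K ((j : ℤ) - (j' : ℤ)) ∧ (r : ℤ) ≤ cyc K ((j' : ℤ) - (j : ℤ))

lemma cyc_eq_self {K : ℕ} {x : ℤ} (h1 : 1 ≤ x) (h2 : x ≤ K) : cyc K x = x := by
  unfold cyc
  have : (x - 1) % K = x - 1 := Int.emod_eq_of_lt (by omega) (by omega)
  omega

lemma cyc_mod (K : ℕ) (x : ℤ) : cyc K x % K = x % K := by
  unfold cyc
  conv_rhs => rw [show x = (x - 1) + 1 by ring]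
  rw [Int.add_emod, Int.emod_emod_of_dvd _ dvd_rfl, ← Int.add_emod]

lemma cyc_congr {K : ℕ} {x y : ℤ} (h : x % K = y % K) : cyc K x = cyc K y := by
  unfold cyc
  rw [Int.sub_emod, h, ← Int.sub_emod]

lemma cyc_bounds {K : ℕ} (hK : 0 < K) (x : ℤ) : 1 ≤ cyc K x ∧ cyc K x ≤ K := by
  have hne : (K : ℤ) ≠ 0 := by exact_mod_cast hK.ne'
  have h1 := Int.emod_nonneg (x - 1) hne
  have h2 := Int.emod_lt_of_pos (x - 1) (by exact_mod_cast hK : (0:ℤ) < (K:ℤ))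
  unfold cyc; omega

lemma rSpread_iff {K r : ℕ} {J : Finset ℕ} (hJ : J ⊆ Finset.Icc 1 K) :
    rSpread K r J ↔ ∀ j ∈ J, ∀ j' ∈ J, j < j' → j + r ≤ j' ∧ j' + r ≤ K + j := by
  have key : ∀ j ∈ J, ∀ j' ∈ J, j < j' →
      cyc K ((j' : ℤ) - j) = (j' : ℤ) - j ∧ cyc K ((j : ℤ) - j') = (K : ℤ) - (j' - j) := by
    intro j hj j' hj' hlt
    have hb1 := Finset.mem_Icc.mp (hJ hj)
    have hb2 := Finset.mem_Icc.mp (hJ hj')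
    constructor
    · exact cyc_eq_self (by omega) (by push_cast; omega)
    · have : cyc K ((j : ℤ) - j') = cyc K ((j : ℤ) - j' + K) := by
        refine cyc_congr ?_
        rw [show (j : ℤ) - j' + K = (j : ℤ) - j' + K * 1 by ring, Int.add_mul_emod_self_left]
      rw [this, cyc_eq_self (by push_cast; omega) (by push_cast; omega)]
      ring
  constructor
  · rintro ⟨-, hsp⟩ j hj j' hj' hlt
    obtain ⟨h1, h2⟩ := hsp j hj j' hj' (by omega)
    obtain ⟨e1, e2⟩ := key j hj j' hj' hlt
    rw [e2] at h1; rw [e1] at h2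
    constructor <;> [skip; skip] <;> push_cast at h1 h2 ⊢ <;> omega
  · intro hp
    refine ⟨hJ, fun j hj j' hj' hne => ?_⟩
    rcases lt_or_gt_of_ne hne with hlt | hlt
    · obtain ⟨h1, h2⟩ := hp j hj j' hj' hlt
      obtain ⟨e1, e2⟩ := key j hj j' hj' hlt
      rw [e1, e2]
      constructor <;> push_cast <;> omega
    · obtain ⟨h1, h2⟩ := hp j' hj' j hj hlt
      obtain ⟨e1, e2⟩ := key j' hj' j hj hlt
      rw [e1, e2]
      constructor <;> push_cast <;> omega

lemma telescope {n r : ℕ} {a : Fin n → ℕ}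
    (hg : ∀ i : ℕ, (h : i + 1 < n) → a ⟨i, Nat.lt_of_succ_lt h⟩ + r ≤ a ⟨i + 1, h⟩) :
    ∀ i j : Fin n, i ≤ j → a i + r * (j.val - i.val) ≤ a j := by
  have main : ∀ d i : ℕ, (h : i + d < n) → a ⟨i, by omega⟩ + r * d ≤ a ⟨i + d, h⟩ := by
    intro d
    induction d with
    | zero => intro i h; simp
    | succ d ih =>
      intro i h
      have h1 : i + d < n := by omega
      have h2 := ih i h1
      have h3 := hg (i + d) h
      rw [Nat.mul_succ, ← Nat.add_assoc]
      exact le_trans (Nat.add_le_add_right h2 r) h3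
  intro i j hij
  have h : i.val + (j.val - i.val) < n := by omega
  have := main (j.val - i.val) i.val h
  have e1 : (⟨i.val, by omega⟩ : Fin n) = i := rfl
  have e2 : (⟨i.val + (j.val - i.val), h⟩ : Fin n) = j := by
    apply Fin.ext; simp; omega
  rwa [e1, e2] at this

/-- inverse construction: the increasing enumeration of a spread set containing `K`,
reconstructed from a subset `E` of the small interval. -/
def aux (K r n : ℕ) (E : Finset ℕ) (h : E.card = n - 1) : Fin n → ℕ :=
  fun i => if hi : (i : ℕ) < n - 1 then E.orderEmbOfFin h ⟨i, hi⟩ + ((i : ℕ) + 1) * (r - 1) else K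

def phiFun (r n : ℕ) (J : Finset ℕ) (hc : J.card = n) : Finset ℕ :=
  Finset.image (fun i : Fin (n - 1) =>
    J.orderEmbOfFin hc (Fin.castLE (Nat.sub_le n 1) i) - ((i : ℕ) + 1) * (r - 1)) Finset.univ

def psiFun (K r n : ℕ) (E : Finset ℕ) (hc : E.card = n - 1) : Finset ℕ :=
  Finset.image (aux K r n E hc) Finset.univ


lemma phi_main (K r n : ℕ) (hr : 0 < r) (hn : 0 < n) (h : r * n ≤ K)
    {J : Finset ℕ} (hsp : rSpread K r J) (hc : J.card = n) (hKm : K ∈ J) :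
    (phiFun r n J hc ⊆ Finset.Icc 1 (K - (r - 1) * n - 1)) ∧
      (phiFun r n J hc).card = n - 1 ∧
      ∀ hc2 : (phiFun r n J hc).card = n - 1, psiFun K r n (phiFun r n J hc) hc2 = J := by
  set a := J.orderEmbOfFin hc with ha
  have hmem : ∀ i, a i ∈ J := fun i => J.orderEmbOfFin_mem hc i
  have hbd : ∀ i, 1 ≤ a i ∧ a i ≤ K := fun i => Finset.mem_Icc.mp (hsp.1 (hmem i))
  have hmono : StrictMono a := (J.orderEmbOfFin hc).strictMono
  have pairs := (rSpread_iff hsp.1).mp hsp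
  have hrs : (r - 1) + 1 = r := by omega
  have emul : ∀ X : ℕ, r * X = (r - 1) * X + X := by
    intro X
    conv_lhs => rw [← hrs]
    rw [Nat.succ_mul]
  have hrn : (r - 1) * n + n = r * n := (emul n).symm
  have hlast : a ⟨n - 1, by omega⟩ = K := by
    have h1 : (K : ℕ) ∈ Set.range a := by
      rw [ha, Finset.range_orderEmbOfFin]; exact hKm
    obtain ⟨i0, hi0⟩ := h1
    have h2 : a i0 ≤ a ⟨n - 1, by omega⟩ := hmono.monotone (by show (i0 : ℕ) ≤ n - 1; have := i0.isLt; omega)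
    have h3 := (hbd ⟨n - 1, by omega⟩).2
    omega
  have hge : ∀ i, r ≤ a i := by
    intro i
    by_cases hc2 : a i = K
    · have : r * 1 ≤ r * n := Nat.mul_le_mul_left r hn
      omega
    · have hlt : a i < K := lt_of_le_of_ne (hbd i).2 hc2
      have := (pairs (a i) (hmem i) K hKm hlt).2
      omega
  have hgap : ∀ i : ℕ, (hh : i + 1 < n) → a ⟨i, Nat.lt_of_succ_lt hh⟩ + r ≤ a ⟨i + 1, hh⟩ := by
    intro i hh
    exact (pairs _ (hmem _) _ (hmem _) (hmono (by exact Nat.lt_succ_self i))).1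
  have htel := telescope hgap
  -- restated facts about `a ∘ castLE`
  have hlb : ∀ i : Fin (n - 1),
      ((i : ℕ) + 1) * (r - 1) + 1 ≤ a (Fin.castLE (Nat.sub_le n 1) i) := by
    intro i
    have h0 : r ≤ a ⟨0, hn⟩ := hge _
    have ht : a ⟨0, hn⟩ + r * ((i : ℕ) - 0) ≤ a (Fin.castLE (Nat.sub_le n 1) i) :=
      htel ⟨0, hn⟩ (Fin.castLE (Nat.sub_le n 1) i) (by exact Nat.zero_le _)
    have e := emul ((i : ℕ) - 0)
    have e2 : ((i : ℕ) + 1) * (r - 1) = (r - 1) * ((i : ℕ) - 0) + (r - 1) := by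
      rw [Nat.sub_zero]; ring
    omega
  have hub : ∀ i : Fin (n - 1),
      a (Fin.castLE (Nat.sub_le n 1) i) + r * (n - 1 - (i : ℕ)) ≤ K := by
    intro i
    have ht : a (Fin.castLE (Nat.sub_le n 1) i) + r * (n - 1 - (i : ℕ)) ≤ a ⟨n - 1, by omega⟩ :=
      htel (Fin.castLE (Nat.sub_le n 1) i) ⟨n - 1, by omega⟩
        (by show (i : ℕ) ≤ n - 1; have := i.isLt; omega)
    omega
  set b : Fin (n - 1) → ℕ := fun i =>
    a (Fin.castLE (Nat.sub_le n 1) i) - ((i : ℕ) + 1) * (r - 1) with hb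
  have hphi : phiFun r n J hc = Finset.image b Finset.univ := rfl
  have hbmono : StrictMono b := by
    intro i j hij
    have hlbi := hlb i
    have hlbj := hlb j
    have ht : a (Fin.castLE (Nat.sub_le n 1) i) + r * ((j : ℕ) - (i : ℕ)) ≤
        a (Fin.castLE (Nat.sub_le n 1) j) :=
      htel (Fin.castLE (Nat.sub_le n 1) i) (Fin.castLE (Nat.sub_le n 1) j)
        (by show (i : ℕ) ≤ (j : ℕ); exact Nat.le_of_lt hij)
    have hd : (j : ℕ) - (i : ℕ) ≥ 1 := by
      have : (i : ℕ) < (j : ℕ) := hij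
      omega
    have e := emul ((j : ℕ) - (i : ℕ))
    have e2 : (r - 1) * ((j : ℕ) - (i : ℕ)) + (r - 1) * (i : ℕ) = (r - 1) * (j : ℕ) := by
      have hh : (j : ℕ) - (i : ℕ) + (i : ℕ) = (j : ℕ) := by
        have : (i : ℕ) < (j : ℕ) := hij
        omega
      calc (r - 1) * ((j : ℕ) - (i : ℕ)) + (r - 1) * (i : ℕ)
          = (r - 1) * (((j : ℕ) - (i : ℕ)) + (i : ℕ)) := by ring
        _ = (r - 1) * (j : ℕ) := by rw [hh]
    have e3 : ((i : ℕ) + 1) * (r - 1) = (r - 1) * (i : ℕ) + (r - 1) := by ring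
    have e4 : ((j : ℕ) + 1) * (r - 1) = (r - 1) * (j : ℕ) + (r - 1) := by ring
    simp only [hb]
    omega
  have hcard : (phiFun r n J hc).card = n - 1 := by
    rw [hphi, Finset.card_image_of_injective _ hbmono.injective, Finset.card_univ,
      Fintype.card_fin]
  have hsub2 : phiFun r n J hc ⊆ Finset.Icc 1 (K - (r - 1) * n - 1) := by
    intro x hx
    rw [hphi] at hx
    simp only [Finset.mem_image, Finset.mem_univ, true_and] at hx
    obtain ⟨i, rfl⟩ := hx
    rw [Finset.mem_Icc]
    have hlbi := hlb i
    have hubi := hub i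
    have hd : 1 ≤ n - 1 - (i : ℕ) := by have := i.isLt; omega
    have e := emul (n - 1 - (i : ℕ))
    have e2 : (r - 1) * (n - 1 - (i : ℕ)) + (r - 1) * ((i : ℕ) + 1) = (r - 1) * n := by
      have hh : (n - 1 - (i : ℕ)) + ((i : ℕ) + 1) = n := by have := i.isLt; omega
      calc (r - 1) * (n - 1 - (i : ℕ)) + (r - 1) * ((i : ℕ) + 1)
          = (r - 1) * ((n - 1 - (i : ℕ)) + ((i : ℕ) + 1)) := by ring
        _ = (r - 1) * n := by rw [hh]
    have e3 : ((i : ℕ) + 1) * (r - 1) = (r - 1) * ((i : ℕ) + 1) := by ring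
    simp only [hb]
    omega
  refine ⟨hsub2, hcard, ?_⟩
  intro hc2
  have hbu : b = (phiFun r n J hc).orderEmbOfFin hc2 := by
    apply Finset.orderEmbOfFin_unique hc2 ?_ hbmono
    intro x
    rw [hphi]
    exact Finset.mem_image_of_mem _ (Finset.mem_univ x)
  have haux : ∀ i : Fin n, aux K r n (phiFun r n J hc) hc2 i = a i := by
    intro i
    by_cases hi : (i : ℕ) < n - 1
    · have h1 : aux K r n (phiFun r n J hc) hc2 i
          = (phiFun r n J hc).orderEmbOfFin hc2 ⟨i, hi⟩ + ((i : ℕ) + 1) * (r - 1) := by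
        simp [aux, hi]
      have h2 : (phiFun r n J hc).orderEmbOfFin hc2 ⟨i, hi⟩ + ((i : ℕ) + 1) * (r - 1)
          = a i - ((i : ℕ) + 1) * (r - 1) + ((i : ℕ) + 1) * (r - 1) := by
        rw [← hbu]; rfl
      have hlbi : ((i : ℕ) + 1) * (r - 1) + 1 ≤ a i := hlb ⟨(i : ℕ), hi⟩
      rw [h1, h2]
      omega
    · have hi2 : (i : ℕ) = n - 1 := by have := i.isLt; omega
      have h1 : aux K r n (phiFun r n J hc) hc2 i = K := by simp [aux, hi]
      rw [h1, ← hlast]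
      congr 1
      exact Fin.ext hi2.symm
  have h2 : psiFun K r n (phiFun r n J hc) hc2 = Finset.image a Finset.univ := by
    unfold psiFun
    exact Finset.image_congr (fun i _ => haux i)
  rw [h2]
  apply Finset.coe_injective
  rw [Finset.coe_image, Finset.coe_univ, Set.image_univ, ha, Finset.range_orderEmbOfFin]

lemma psi_main (K r n : ℕ) (hr : 0 < r) (hn : 0 < n) (h : r * n ≤ K)
    {E : Finset ℕ} (hsub : E ⊆ Finset.Icc 1 (K - (r - 1) * n - 1)) (hc : E.card = n - 1) :
    psiFun K r n E hc ⊆ Finset.Icc 1 K ∧ rSpread K r (psiFun K r n E hc) ∧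
      (psiFun K r n E hc).card = n ∧ K ∈ psiFun K r n E hc ∧
      ∀ hc2 : (psiFun K r n E hc).card = n, phiFun r n (psiFun K r n E hc) hc2 = E := by
  have hK0 : 0 < K := by
    have : r * 1 ≤ r * n := Nat.mul_le_mul_left r hn
    omega
  set e := E.orderEmbOfFin hc with he
  set a' := aux K r n E hc with ha'
  have hemem : ∀ i, e i ∈ E := fun i => E.orderEmbOfFin_mem hc i
  have hebd : ∀ i, 1 ≤ e i ∧ e i ≤ K - (r - 1) * n - 1 :=
    fun i => Finset.mem_Icc.mp (hsub (hemem i))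
  have hemono : StrictMono e := (E.orderEmbOfFin hc).strictMono
  have hrs : (r - 1) + 1 = r := by omega
  have emul : ∀ X : ℕ, r * X = (r - 1) * X + X := by
    intro X
    conv_lhs => rw [← hrs]
    rw [Nat.succ_mul]
  have hrn : (r - 1) * n + n = r * n := (emul n).symm
  have hMK : (K - (r - 1) * n - 1) + (r - 1) * n + 1 = K := by omega
  have hapos : ∀ (i : Fin n) (hi : (i : ℕ) < n - 1),
      a' i = e ⟨(i : ℕ), hi⟩ + ((i : ℕ) + 1) * (r - 1) := by
    intro i hi
    exact dif_pos hi
  have halast : ∀ (i : Fin n), ¬ ((i : ℕ) < n - 1) → a' i = K := by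
    intro i hi
    exact dif_neg hi
  have hmul1 : ∀ X : ℕ, (X + 1) * (r - 1) = X * (r - 1) + (r - 1) := fun X => by ring
  have hnn : (n - 1) * (r - 1) + (r - 1) = (r - 1) * n := by
    have hh : (n - 1) + 1 = n := by omega
    calc (n - 1) * (r - 1) + (r - 1) = ((n - 1) + 1) * (r - 1) := by ring
      _ = (r - 1) * n := by rw [hh]; ring
  have hgap' : ∀ i : ℕ, (hh : i + 1 < n) → a' ⟨i, Nat.lt_of_succ_lt hh⟩ + r ≤ a' ⟨i + 1, hh⟩ := by
    intro i hh
    have hi : i < n - 1 := by omega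
    have hv1 : a' ⟨i, Nat.lt_of_succ_lt hh⟩ = e ⟨i, hi⟩ + (i + 1) * (r - 1) := dif_pos hi
    rw [hv1]
    by_cases h2 : i + 1 < n - 1
    · have hv2 : a' ⟨i + 1, hh⟩ = e ⟨i + 1, h2⟩ + (i + 1 + 1) * (r - 1) := dif_pos h2
      rw [hv2]
      have hlt : e ⟨i, hi⟩ < e ⟨i + 1, h2⟩ := hemono (by exact Nat.lt_succ_self i)
      have e1 := hmul1 i
      have e2 := hmul1 (i + 1)
      omega
    · rw [halast ⟨i + 1, hh⟩ h2]
      have hi2 : i + 1 = n - 1 := by omega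
      have hub := (hebd ⟨i, hi⟩).2
      have e3 : (i + 1) * (r - 1) = (n - 1) * (r - 1) := by rw [hi2]
      omega
  have htel' := telescope hgap'
  have ha'bd : ∀ i : Fin n, 1 ≤ a' i ∧ a' i ≤ K := by
    intro i
    by_cases hi : (i : ℕ) < n - 1
    · rw [hapos i hi]
      have h1 := (hebd ⟨(i : ℕ), hi⟩).1
      have h2 := (hebd ⟨(i : ℕ), hi⟩).2
      have h3 : ((i : ℕ) + 1) * (r - 1) ≤ (n - 1) * (r - 1) :=
        Nat.mul_le_mul_right _ (by omega)
      have e4 := hnn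
      omega
    · rw [halast i hi]; omega
  have ha'ge : ∀ i : Fin n, r ≤ a' i := by
    intro i
    by_cases hi : (i : ℕ) < n - 1
    · rw [hapos i hi]
      have h1 := (hebd ⟨(i : ℕ), hi⟩).1
      have h3 : 1 * (r - 1) ≤ ((i : ℕ) + 1) * (r - 1) :=
        Nat.mul_le_mul_right _ (by omega)
      omega
    · rw [halast i hi]
      have : r * 1 ≤ r * n := Nat.mul_le_mul_left r hn
      omega
  have ha'mono : StrictMono a' := by
    intro i j hij
    have hd : 1 ≤ (j : ℕ) - (i : ℕ) := by
      have : (i : ℕ) < (j : ℕ) := hij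
      omega
    have ht := htel' i j (le_of_lt hij)
    have : 1 * 1 ≤ r * ((j : ℕ) - (i : ℕ)) := Nat.mul_le_mul hr hd
    omega
  have hpsi : psiFun K r n E hc = Finset.image a' Finset.univ := rfl
  have hcard : (psiFun K r n E hc).card = n := by
    rw [hpsi, Finset.card_image_of_injective _ ha'mono.injective, Finset.card_univ,
      Fintype.card_fin]
  have hKmem : K ∈ psiFun K r n E hc := by
    rw [hpsi]
    have : a' ⟨n - 1, by omega⟩ = K := halast _ (by simp)
    rw [← this]
    exact Finset.mem_image_of_mem _ (Finset.mem_univ _)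
  have hsubK : psiFun K r n E hc ⊆ Finset.Icc 1 K := by
    intro x hx
    rw [hpsi] at hx
    simp only [Finset.mem_image, Finset.mem_univ, true_and] at hx
    obtain ⟨i, rfl⟩ := hx
    exact Finset.mem_Icc.mpr (ha'bd i)
  have hspread : rSpread K r (psiFun K r n E hc) := by
    rw [rSpread_iff hsubK]
    intro x hx y hy hxy
    rw [hpsi] at hx hy
    simp only [Finset.mem_image, Finset.mem_univ, true_and] at hx hy
    obtain ⟨i, rfl⟩ := hx
    obtain ⟨j, rfl⟩ := hy
    have hij : i < j := by
      by_contra hcon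
      have : a' j ≤ a' i := ha'mono.monotone (not_lt.mp hcon)
      omega
    have hd : 1 ≤ (j : ℕ) - (i : ℕ) := by
      have : (i : ℕ) < (j : ℕ) := hij
      omega
    have ht := htel' i j (le_of_lt hij)
    have h1 : r * 1 ≤ r * ((j : ℕ) - (i : ℕ)) := Nat.mul_le_mul_left r hd
    have h2 := (ha'bd j).2
    have h3 := ha'ge i
    omega
  refine ⟨hsubK, hspread, hcard, hKmem, ?_⟩
  intro hc2
  have hau : a' = (psiFun K r n E hc).orderEmbOfFin hc2 := by
    apply Finset.orderEmbOfFin_unique hc2 ?_ ha'mono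
    intro x
    rw [hpsi]
    exact Finset.mem_image_of_mem _ (Finset.mem_univ x)
  have hval : ∀ i : Fin (n - 1),
      (psiFun K r n E hc).orderEmbOfFin hc2 (Fin.castLE (Nat.sub_le n 1) i)
        - ((i : ℕ) + 1) * (r - 1) = e i := by
    intro i
    rw [← hau]
    have hi : ((Fin.castLE (Nat.sub_le n 1) i : Fin n) : ℕ) < n - 1 := i.isLt
    have hv : a' (Fin.castLE (Nat.sub_le n 1) i) = e i + ((i : ℕ) + 1) * (r - 1) :=
      dif_pos hi
    rw [hv]
    omega
  have h2 : phiFun r n (psiFun K r n E hc) hc2 = Finset.image e Finset.univ := by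
    unfold phiFun
    exact Finset.image_congr (fun i _ => hval i)
  rw [h2]
  apply Finset.coe_injective
  rw [Finset.coe_image, Finset.coe_univ, Set.image_univ, he, Finset.range_orderEmbOfFin]

lemma cardK (K r n : ℕ) (hK : 0 < K) (hr : 0 < r) (hn : 0 < n) (h : r * n ≤ K) :
    {J : Finset ℕ | rSpread K r J ∧ J.card = n ∧ K ∈ J}.ncard
      = Nat.choose (K - (r - 1) * n - 1) (n - 1) := by
  classical
  have hset : {J : Finset ℕ | rSpread K r J ∧ J.card = n ∧ K ∈ J}
      = ↑((Finset.Icc 1 K).powerset.filter (fun J => rSpread K r J ∧ J.card = n ∧ K ∈ J)) := by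
    ext J
    simp only [Set.mem_setOf_eq, Finset.coe_filter, Finset.mem_powerset]
    constructor
    · intro hJ; exact ⟨hJ.1.1, hJ⟩
    · exact fun hJ => hJ.2
  rw [hset, Set.ncard_coe_finset]
  have hS : ((Finset.Icc 1 (K - (r - 1) * n - 1)).powersetCard (n - 1)).card
      = Nat.choose (K - (r - 1) * n - 1) (n - 1) := by
    rw [Finset.card_powersetCard, Nat.card_Icc]
    simp
  rw [← hS]
  refine Finset.card_bij'
    (fun J hJ => phiFun r n J ((Finset.mem_filter.mp hJ).2.2.1))
    (fun E hE => psiFun K r n E ((Finset.mem_powersetCard.mp hE).2))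
    (fun J hJ => ?_) (fun E hE => ?_) (fun J hJ => ?_) (fun E hE => ?_)
  · obtain ⟨hpow, hsp, hcard, hKm⟩ := Finset.mem_filter.mp hJ
    obtain ⟨h1, h2, -⟩ := phi_main K r n hr hn h hsp hcard hKm
    exact Finset.mem_powersetCard.mpr ⟨h1, h2⟩
  · obtain ⟨hsubE, hcE⟩ := Finset.mem_powersetCard.mp hE
    obtain ⟨h1, h2, h3, h4, -⟩ := psi_main K r n hr hn h hsubE hcE
    exact Finset.mem_filter.mpr ⟨Finset.mem_powerset.mpr h1, h2, h3, h4⟩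
  · obtain ⟨hpow, hsp, hcard, hKm⟩ := Finset.mem_filter.mp hJ
    obtain ⟨-, -, hinv⟩ := phi_main K r n hr hn h hsp hcard hKm
    exact hinv _
  · obtain ⟨hsubE, hcE⟩ := Finset.mem_powersetCard.mp hE
    obtain ⟨-, -, -, -, hinv⟩ := psi_main K r n hr hn h hsubE hcE
    exact hinv _

lemma spread_map {K r : ℕ} {f : ℕ → ℕ}
    (hf : ∀ j ∈ Finset.Icc 1 K, f j ∈ Finset.Icc 1 K)
    (hmod : ∀ j j' : ℕ, ((f j : ℤ) - f j') % K = ((j : ℤ) - j') % K)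
    {J : Finset ℕ} (hJ : rSpread K r J) : rSpread K r (Finset.image f J) := by
  constructor
  · intro x hx
    obtain ⟨j, hj, rfl⟩ := Finset.mem_image.mp hx
    exact hf j (hJ.1 hj)
  · intro x hx y hy hxy
    obtain ⟨j, hj, rfl⟩ := Finset.mem_image.mp hx
    obtain ⟨j', hj', rfl⟩ := Finset.mem_image.mp hy
    have hne : j ≠ j' := by rintro rfl; exact hxy rfl
    obtain ⟨h1, h2⟩ := hJ.2 j hj j' hj' hne
    exact ⟨by rwa [cyc_congr (hmod j j')], by rwa [cyc_congr (hmod j' j)]⟩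

theorem stmt1 (K r n k : ℕ) (hK : 0 < K) (hr : 0 < r) (hn : 0 < n) (h : r * n ≤ K)
    (hk : k ∈ Finset.Icc 1 K) :
    {J : Finset ℕ | rSpread K r J ∧ J.card = n ∧ k ∈ J}.ncard =
      Nat.choose (K - (r - 1) * n - 1) (n - 1) := by
  classical
  obtain ⟨hk1, hk2⟩ := Finset.mem_Icc.mp hk
  set σ : ℕ → ℕ := fun j => (cyc K ((j : ℤ) - k)).toNat with hσdef
  set τ : ℕ → ℕ := fun j => (cyc K ((j : ℤ) + k)).toNat with hτdef
  have hσcast : ∀ j : ℕ, ((σ j : ℕ) : ℤ) = cyc K ((j : ℤ) - k) := by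
    intro j
    exact Int.toNat_of_nonneg (by linarith [(cyc_bounds hK ((j : ℤ) - k)).1])
  have hτcast : ∀ j : ℕ, ((τ j : ℕ) : ℤ) = cyc K ((j : ℤ) + k) := by
    intro j
    exact Int.toNat_of_nonneg (by linarith [(cyc_bounds hK ((j : ℤ) + k)).1])
  have hσmem : ∀ j ∈ Finset.Icc 1 K, σ j ∈ Finset.Icc 1 K := by
    intro j _
    obtain ⟨hb1, hb2⟩ := cyc_bounds hK ((j : ℤ) - k)
    rw [Finset.mem_Icc]
    constructor
    · exact_mod_cast (hσcast j) ▸ hb1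
    · exact_mod_cast (hσcast j) ▸ hb2
  have hτmem : ∀ j ∈ Finset.Icc 1 K, τ j ∈ Finset.Icc 1 K := by
    intro j _
    obtain ⟨hb1, hb2⟩ := cyc_bounds hK ((j : ℤ) + k)
    rw [Finset.mem_Icc]
    constructor
    · exact_mod_cast (hτcast j) ▸ hb1
    · exact_mod_cast (hτcast j) ▸ hb2
  have hmodσ : ∀ j j' : ℕ, ((σ j : ℤ) - σ j') % K = ((j : ℤ) - j') % K := by
    intro j j'
    rw [Int.sub_emod, hσcast, hσcast, cyc_mod, cyc_mod, ← Int.sub_emod]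
    congr 1
    ring
  have hmodτ : ∀ j j' : ℕ, ((τ j : ℤ) - τ j') % K = ((j : ℤ) - j') % K := by
    intro j j'
    rw [Int.sub_emod, hτcast, hτcast, cyc_mod, cyc_mod, ← Int.sub_emod]
    congr 1
    ring
  have hτσ : ∀ j ∈ Finset.Icc 1 K, τ (σ j) = j := by
    intro j hj
    obtain ⟨hj1, hj2⟩ := Finset.mem_Icc.mp hj
    have e1 : cyc K ((σ j : ℤ) + k) = cyc K j := by
      apply cyc_congr
      rw [Int.add_emod, hσcast, cyc_mod, ← Int.add_emod]
      congr 1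
      ring
    show (cyc K ((σ j : ℤ) + k)).toNat = j
    rw [e1, cyc_eq_self (by exact_mod_cast hj1) (by exact_mod_cast hj2)]
    exact Int.toNat_natCast j
  have hστ : ∀ j ∈ Finset.Icc 1 K, σ (τ j) = j := by
    intro j hj
    obtain ⟨hj1, hj2⟩ := Finset.mem_Icc.mp hj
    have e1 : cyc K ((τ j : ℤ) - k) = cyc K j := by
      apply cyc_congr
      rw [Int.sub_emod, hτcast, cyc_mod, ← Int.sub_emod]
      congr 1
      ring
    show (cyc K ((τ j : ℤ) - k)).toNat = j
    rw [e1, cyc_eq_self (by exact_mod_cast hj1) (by exact_mod_cast hj2)]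
    exact Int.toNat_natCast j
  have hσk : σ k = K := by
    show (cyc K ((k : ℤ) - k)).toNat = K
    have e1 : cyc K ((k : ℤ) - k) = cyc K K := by
      apply cyc_congr
      simp
    rw [e1, cyc_eq_self (by exact_mod_cast hK) le_rfl]
    exact Int.toNat_natCast K
  have hτK : τ K = k := by
    show (cyc K ((K : ℤ) + k)).toNat = k
    have e1 : cyc K ((K : ℤ) + k) = cyc K k := by
      apply cyc_congr
      rw [Int.add_emod, Int.emod_self]
      simp [Int.emod_emod_of_dvd]
    rw [e1, cyc_eq_self (by exact_mod_cast hk1) (by exact_mod_cast hk2)]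
    exact Int.toNat_natCast k
  have hback : ∀ J : Finset ℕ, J ⊆ Finset.Icc 1 K → (J.image σ).image τ = J := by
    intro J hJ
    have e1 : Finset.image (τ ∘ σ) J = Finset.image id J :=
      Finset.image_congr (fun x hx => hτσ x (hJ hx))
    rw [Finset.image_image, e1, Finset.image_id]
  have hback2 : ∀ J : Finset ℕ, J ⊆ Finset.Icc 1 K → (J.image τ).image σ = J := by
    intro J hJ
    have e1 : Finset.image (σ ∘ τ) J = Finset.image id J :=
      Finset.image_congr (fun x hx => hστ x (hJ hx))
    rw [Finset.image_image, e1, Finset.image_id]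
  have hinjσ : ∀ J : Finset ℕ, J ⊆ Finset.Icc 1 K → (J.image σ).card = J.card := by
    intro J hJ
    apply Finset.card_image_of_injOn
    intro x hx y hy hxy
    rw [← hτσ x (hJ hx), ← hτσ y (hJ hy), hxy]
  have hinjτ : ∀ J : Finset ℕ, J ⊆ Finset.Icc 1 K → (J.image τ).card = J.card := by
    intro J hJ
    apply Finset.card_image_of_injOn
    intro x hx y hy hxy
    rw [← hστ x (hJ hx), ← hστ y (hJ hy), hxy]
  rw [← cardK K r n hK hr hn h]
  have himg : (fun J => Finset.image σ J) '' {J : Finset ℕ | rSpread K r J ∧ J.card = n ∧ k ∈ J}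
      = {J : Finset ℕ | rSpread K r J ∧ J.card = n ∧ K ∈ J} := by
    ext J'
    simp only [Set.mem_image, Set.mem_setOf_eq]
    constructor
    · rintro ⟨J, ⟨hsp, hcard, hkm⟩, rfl⟩
      refine ⟨spread_map hσmem hmodσ hsp, ?_, ?_⟩
      · rw [hinjσ J hsp.1]; exact hcard
      · rw [← hσk]; exact Finset.mem_image_of_mem σ hkm
    · rintro ⟨hsp, hcard, hKm⟩
      refine ⟨J'.image τ, ⟨spread_map hτmem hmodτ hsp, ?_, ?_⟩, hback2 J' hsp.1⟩
      · rw [hinjτ J' hsp.1]; exact hcard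
      · rw [← hτK]; exact Finset.mem_image_of_mem τ hKm
  rw [← himg]
  have hinj : Set.InjOn (fun J => Finset.image σ J)
      {J : Finset ℕ | rSpread K r J ∧ J.card = n ∧ k ∈ J} := by
    intro J1 h1 J2 h2 heq
    have h3 := congrArg (Finset.image τ) heq
    simp only at h3
    rwa [hback J1 h1.1.1, hback J2 h2.1.1] at h3
  exact (Set.ncard_image_of_injOn hinj).symm
end

section
/- Let K = rt + L with gcd(K,t) = 1. Pairing the (K,K,t,r) caching array C defined by C[j][k] = star for j ∈ cyclic interval [⟨(k-1)t+1⟩_K, ⟨kt⟩_K] with the delivery array D whose stars occur at D[j][k] = star for j ∈ ∪_{i ∈ [k,⟨k+r-1⟩_K]} [⟨(i-1)t+1⟩_K, ⟨it⟩_K], each column of D contains exactly rt stars and each row of D contains exactly rt stars. -/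
lemma cyc_mem {K : ℕ} (hK : 0 < K) (a : ℤ) : cyc K a ∈ Set.Icc (1:ℤ) (K:ℤ) := by
  have h0 : (0:ℤ) < (K:ℤ) := by exact_mod_cast hK
  have h1 := Int.emod_nonneg (a-1) (by omega : (K:ℤ) ≠ 0)
  have h2 := Int.emod_lt_of_pos (a-1) h0
  simp only [cyc, Set.mem_Icc]
  omega

lemma cyc_modeq (K : ℕ) (a : ℤ) : cyc K a ≡ a [ZMOD K] := by
  have h : (a - 1) % (K:ℤ) ≡ a - 1 [ZMOD K] := Int.emod_emod_of_dvd _ dvd_rfl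
  simpa [cyc] using h.add_right 1

lemma cyc_congr_s10 {K : ℕ} {a b : ℤ} (h : a ≡ b [ZMOD K]) : cyc K a = cyc K b := by
  have h2 : (a - 1) % (K:ℤ) = (b - 1) % (K:ℤ) := h.sub_right 1
  simp [cyc, h2]

lemma cyc_inj {K : ℕ} {a b : ℤ} (h : cyc K a = cyc K b) : a ≡ b [ZMOD K] := by
  have h2 : (a-1) % (K:ℤ) = (b-1) % (K:ℤ) := by
    simpa [cyc] using h
  have h3 : a - 1 ≡ b - 1 [ZMOD K] := h2
  simpa using h3.add_right 1

lemma mem_cancel {K : ℕ} {a b : ℤ} (ha : a ∈ Set.Icc 1 (K:ℤ)) (hb : b ∈ Set.Icc 1 (K:ℤ))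
    (h : a ≡ b [ZMOD K]) : a = b := by
  simp only [Set.mem_Icc] at ha hb
  have h2 : (a-1) % (K:ℤ) = (b-1) % (K:ℤ) := h.sub_right 1
  rw [Int.emod_eq_of_lt (by omega) (by omega), Int.emod_eq_of_lt (by omega) (by omega)] at h2
  omega

lemma eq_cyc_iff {K : ℕ} (hK : 0 < K) {j a : ℤ} (hj : j ∈ Set.Icc 1 (K:ℤ)) :
    j = cyc K a ↔ j ≡ a [ZMOD K] := by
  constructor
  · rintro rfl; exact cyc_modeq K a
  · intro h; exact mem_cancel hj (cyc_mem hK a) (h.trans (cyc_modeq K a).symm)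

lemma small_cancel {K m1 m2 : ℕ} (h1 : m1 < K) (h2 : m2 < K)
    (h : (K:ℤ) ∣ (m2:ℤ) - m1) : m1 = m2 := by
  have hm : (m1:ℤ) ≡ m2 [ZMOD K] := Int.modEq_iff_dvd.mpr h
  rw [Int.ModEq, Int.emod_eq_of_lt (by positivity) (by exact_mod_cast h1),
    Int.emod_eq_of_lt (by positivity) (by exact_mod_cast h2)] at hm
  exact_mod_cast hm

/-- `D[j][k] = star` iff `j` lies in the caching interval of one of the `r`
consecutive caches `k, ⟨k+1⟩_K, ..., ⟨k+r-1⟩_K`, where cache `i` covers the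
cyclic interval `[⟨(i-1)t+1⟩_K, ⟨it⟩_K]`. -/
def star10 (K r t : ℕ) (j k : ℤ) : Prop :=
  ∃ a : ℕ, a < r ∧ ∃ b : ℕ, b < t ∧ j = cyc K ((cyc K (k + a) - 1) * t + 1 + b)

lemma star10_iff {K r t : ℕ} (ht : 0 < t) {j k : ℤ} :
    star10 K r t j k ↔ ∃ m : ℕ, m < r * t ∧ j = cyc K ((k - 1) * t + 1 + m) := by
  constructor
  · rintro ⟨a, ha, b, hb, rfl⟩
    refine ⟨a * t + b, ?_, ?_⟩
    · have : (a+1) * t ≤ r * t := Nat.mul_le_mul_right t (by omega)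
      nlinarith
    · apply cyc_congr_s10
      obtain ⟨d, hd⟩ := Int.modEq_iff_dvd.mp (cyc_modeq K (k + a))
      apply Int.ModEq.symm
      apply Int.modEq_iff_dvd.mpr
      exact ⟨-d * t, by push_cast; linear_combination (-(t:ℤ)) * hd⟩
  · rintro ⟨m, hm, rfl⟩
    refine ⟨m / t, (Nat.div_lt_iff_lt_mul ht).mpr (by omega), m % t, Nat.mod_lt _ ht, ?_⟩
    apply cyc_congr_s10
    obtain ⟨d, hd⟩ := Int.modEq_iff_dvd.mp (cyc_modeq K (k + (m / t : ℕ)))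
    have hmod : ((m / t : ℕ) : ℤ) * t + (m % t : ℕ) = (m : ℤ) := by
      push_cast; rw [mul_comm]; exact_mod_cast Nat.div_add_mod m t
    apply Int.ModEq.symm
    apply Int.modEq_iff_dvd.mpr
    exact ⟨d * t, by linear_combination (t:ℤ) * hd - hmod⟩

theorem stmt10 (K r t L : ℕ) (hr : 0 < r) (ht : 0 < t) (hL : 0 < L)
    (hK : K = r * t + L) (hgcd : Nat.gcd K t = 1) :
    -- each column of D contains exactly rt stars
    (∀ k ∈ Set.Icc (1 : ℤ) K,
      {j ∈ Set.Icc (1 : ℤ) K | star10 K r t j k}.ncard = r * t) ∧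
    -- each row of D contains exactly rt stars
    (∀ j ∈ Set.Icc (1 : ℤ) K,
      {k ∈ Set.Icc (1 : ℤ) K | star10 K r t j k}.ncard = r * t) := by
  have hK0 : 0 < K := by omega
  have hrtK : r * t < K := by omega
  constructor
  · intro k hk
    have hset : {j ∈ Set.Icc (1 : ℤ) K | star10 K r t j k} =
        ↑((Finset.range (r * t)).image (fun m : ℕ => cyc K ((k - 1) * t + 1 + m))) := by
      ext j
      simp only [Set.mem_setOf_eq, Finset.coe_image, Set.mem_image, Finset.mem_coe,
        Finset.mem_range, star10_iff ht]
      constructor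
      · rintro ⟨hj, m, hm, rfl⟩; exact ⟨m, hm, rfl⟩
      · rintro ⟨m, hm, rfl⟩; exact ⟨cyc_mem hK0 _, m, hm, rfl⟩
    rw [hset, Set.ncard_coe_finset]
    rw [Finset.card_image_of_injOn, Finset.card_range]
    intro m1 hm1 m2 hm2 h
    simp only [Finset.mem_coe, Finset.mem_range] at hm1 hm2
    have h2 := cyc_inj h
    obtain ⟨c, hc⟩ := Int.modEq_iff_dvd.mp h2
    exact small_cancel (K := K) (by omega) (by omega) ⟨c, by linear_combination hc⟩
  · intro j hj
    have hab := Nat.gcd_eq_gcd_ab K t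
    rw [hgcd] at hab
    set v : ℤ := Nat.gcdB K t with hv
    obtain ⟨d, hd⟩ : (K:ℤ) ∣ 1 - t * v := ⟨Nat.gcdA K t, by push_cast at hab; linarith⟩
    have hset : {k ∈ Set.Icc (1 : ℤ) K | star10 K r t j k} =
        ↑((Finset.range (r * t)).image (fun m : ℕ => cyc K (1 + v * (j - 1 - m)))) := by
      ext k
      simp only [Set.mem_setOf_eq, Finset.coe_image, Set.mem_image, Finset.mem_coe,
        Finset.mem_range, star10_iff ht]
      constructor
      · rintro ⟨hkm, m, hm, hjm⟩
        refine ⟨m, hm, ?_⟩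
        obtain ⟨c, hc⟩ := Int.modEq_iff_dvd.mp ((eq_cyc_iff hK0 hj).mp hjm)
        exact ((eq_cyc_iff hK0 hkm).mpr (Int.ModEq.symm (Int.modEq_iff_dvd.mpr
          ⟨v * c + (k - 1) * d, by linear_combination v * hc + (k-1) * hd⟩))).symm
      · rintro ⟨m, hm, rfl⟩
        refine ⟨cyc_mem hK0 _, m, hm, ?_⟩
        obtain ⟨c, hc⟩ := Int.modEq_iff_dvd.mp (cyc_modeq K (1 + v * (j - 1 - m)))
        exact (eq_cyc_iff hK0 hj).mpr (Int.ModEq.symm (Int.modEq_iff_dvd.mpr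
          ⟨t * c + (j - 1 - m) * d, by linear_combination (t:ℤ) * hc + (j-1-(m:ℤ)) * hd⟩))
    rw [hset, Set.ncard_coe_finset]
    rw [Finset.card_image_of_injOn, Finset.card_range]
    intro m1 hm1 m2 hm2 h
    simp only [Finset.mem_coe, Finset.mem_range] at hm1 hm2
    obtain ⟨c, hc⟩ := Int.modEq_iff_dvd.mp (cyc_inj h)
    exact small_cancel (K := K) (by omega) (by omega)
      ⟨-t * c - ((m1:ℤ) - m2) * d, by linear_combination (-(t:ℤ)) * hc + (-((m1:ℤ)-m2)) * hd⟩
end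

section
/- Consider the K × K array D' with stars in column k exactly at rows in the cyclic interval [k, ⟨k+rt-1⟩_K], and with integer entries assigned for each s ∈ [(m-1)K], writing s = pK + q with p ∈ [0, m-2], q ∈ [K]: if p is even, D'[q][⟨(p/2)(rt+L)+q+i⟩_K] = s for i ∈ [L] and D'[⟨(p/2)(rt+L)+rt+q⟩_K][⟨q-rt+i⟩_K] = s for i ∈ [rt]; if p is odd, D'[q][⟨((p-1)/2)(rt+L)+L+q+i⟩_K] = s for i ∈ [rt] and D'[⟨((p+1)/2)(rt+L)+q⟩_K][⟨q-rt+i⟩_K] = s for i ∈ [L]. Assuming K = m·rt + (m-1)L with L ≥ rt and m ≥ 2, each integer s appears exactly rt + L times in D'. -/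
/-- Cell `(j,k)` of `D'` carries the integer `s ∈ [(m-1)K]`, where
`s = pK + q` with `p ∈ [0, m-2]`, `q ∈ [K]`, following the integer
assignment of Construction III. -/
def pos13 (K r t L m : ℕ) (s j k : ℤ) : Prop :=
  ∃ p q : ℤ, s = p * K + q ∧ 0 ≤ p ∧ p ≤ (m : ℤ) - 2 ∧ 1 ≤ q ∧ q ≤ K ∧
    ((Even p ∧
      ((j = q ∧ ∃ i : ℤ, 1 ≤ i ∧ i ≤ L ∧
          k = cyc K (p / 2 * ((r : ℤ) * t + L) + q + i)) ∨
       (j = cyc K (p / 2 * ((r : ℤ) * t + L) + (r : ℤ) * t + q) ∧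
        ∃ i : ℤ, 1 ≤ i ∧ i ≤ (r : ℤ) * t ∧ k = cyc K (q - (r : ℤ) * t + i)))) ∨
     (¬ Even p ∧
      ((j = q ∧ ∃ i : ℤ, 1 ≤ i ∧ i ≤ (r : ℤ) * t ∧
          k = cyc K ((p - 1) / 2 * ((r : ℤ) * t + L) + L + q + i)) ∨
       (j = cyc K ((p + 1) / 2 * ((r : ℤ) * t + L) + q) ∧
        ∃ i : ℤ, 1 ≤ i ∧ i ≤ L ∧ k = cyc K (q - (r : ℤ) * t + i)))))

lemma cyc_eq_cyc_iff {K : ℕ} (a b : ℤ) :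
    cyc K a = cyc K b ↔ (K : ℤ) ∣ (a - b) := by
  unfold cyc
  constructor
  · intro h
    have h2 : (a - 1) % K = (b - 1) % K := by linarith
    have h3 : (K : ℤ) ∣ (a - 1) - (b - 1) := Int.ModEq.dvd (Int.ModEq.symm h2)
    simpa using h3
  · intro h
    have h3 : (a - 1) % K = (b - 1) % K := by
      apply Int.ModEq.symm
      rw [Int.modEq_iff_dvd]
      simpa using h
    linarith

lemma cyc_self {K : ℕ} {q : ℤ} (h1 : 1 ≤ q) (h2 : q ≤ K) : cyc K q = q := by
  unfold cyc
  rw [Int.emod_eq_of_lt (by linarith) (by linarith)]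
  ring

lemma count_two (K : ℕ) (hK : 0 < K) (j1 j2 c1 c2 : ℤ) (N1 N2 : ℕ)
    (hN1 : N1 ≤ K) (hN2 : N2 ≤ K) (hj : j1 ≠ j2) :
    {jk : ℤ × ℤ | (jk.1 = j1 ∧ ∃ i : ℤ, 1 ≤ i ∧ i ≤ (N1 : ℤ) ∧ jk.2 = cyc K (c1 + i)) ∨
      (jk.1 = j2 ∧ ∃ i : ℤ, 1 ≤ i ∧ i ≤ (N2 : ℤ) ∧ jk.2 = cyc K (c2 + i))}.ncard
      = N1 + N2 := by
  have inj : ∀ (c : ℤ) (N : ℕ), N ≤ K → ∀ i ∈ Finset.Icc (1:ℤ) (N:ℤ),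
      ∀ i' ∈ Finset.Icc (1:ℤ) (N:ℤ), cyc K (c + i) = cyc K (c + i') → i = i' := by
    intro c N hN i hi i' hi' h
    simp only [Finset.mem_Icc] at hi hi'
    rw [cyc_eq_cyc_iff] at h
    have : (K : ℤ) ∣ i - i' := by simpa [add_sub_add_left_eq_sub] using h
    rcases this with ⟨d, hd⟩
    have hK' : (0:ℤ) < K := by exact_mod_cast hK
    have hNK : (N : ℤ) ≤ K := by exact_mod_cast hN
    have hd0 : d = 0 := by nlinarith [hd]
    rw [hd0, mul_zero] at hd
    omega
  set F1 : Finset (ℤ × ℤ) :=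
    (Finset.Icc (1:ℤ) (N1:ℤ)).image (fun i => (j1, cyc K (c1 + i))) with hF1
  set F2 : Finset (ℤ × ℤ) :=
    (Finset.Icc (1:ℤ) (N2:ℤ)).image (fun i => (j2, cyc K (c2 + i))) with hF2
  have hset : {jk : ℤ × ℤ | (jk.1 = j1 ∧ ∃ i : ℤ, 1 ≤ i ∧ i ≤ (N1 : ℤ) ∧ jk.2 = cyc K (c1 + i)) ∨
      (jk.1 = j2 ∧ ∃ i : ℤ, 1 ≤ i ∧ i ≤ (N2 : ℤ) ∧ jk.2 = cyc K (c2 + i))} = ↑(F1 ∪ F2) := by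
    ext ⟨j, k⟩
    simp only [hF1, hF2, Set.mem_setOf_eq, Finset.coe_union, Set.mem_union, Finset.coe_image,
      Set.mem_image, Finset.mem_coe, Finset.mem_Icc, Prod.mk.injEq]
    constructor
    · rintro (⟨hj1, i, h1, h2, h3⟩ | ⟨hj2, i, h1, h2, h3⟩)
      · exact Or.inl ⟨i, ⟨h1, h2⟩, hj1.symm, h3.symm⟩
      · exact Or.inr ⟨i, ⟨h1, h2⟩, hj2.symm, h3.symm⟩
    · rintro (⟨i, ⟨h1, h2⟩, hj1, h3⟩ | ⟨i, ⟨h1, h2⟩, hj2, h3⟩)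
      · exact Or.inl ⟨hj1.symm, i, h1, h2, h3.symm⟩
      · exact Or.inr ⟨hj2.symm, i, h1, h2, h3.symm⟩
  rw [hset, Set.ncard_coe_finset]
  have hdisj : Disjoint F1 F2 := by
    rw [Finset.disjoint_left]
    rintro ⟨a, b⟩ h1 h2
    simp only [hF1, hF2, Finset.mem_image, Prod.mk.injEq] at h1 h2
    obtain ⟨i, _, hi, _⟩ := h1
    obtain ⟨i', _, hi', _⟩ := h2
    exact hj (hi ▸ hi' ▸ rfl)
  rw [Finset.card_union_of_disjoint hdisj]
  have hc1 : F1.card = N1 := by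
    rw [hF1, Finset.card_image_of_injOn (fun i hi i' hi' h => inj c1 N1 hN1 i hi i' hi'
      (by simpa [Prod.ext_iff] using h))]
    rw [Int.card_Icc]
    simp
  have hc2 : F2.card = N2 := by
    rw [hF2, Finset.card_image_of_injOn (fun i hi i' hi' h => inj c2 N2 hN2 i hi i' hi'
      (by simpa [Prod.ext_iff] using h))]
    rw [Int.card_Icc]
    simp
  omega

lemma not_dvd_of_pos_of_lt {K : ℕ} {x : ℤ} (h1 : 0 < x) (h2 : x < K) : ¬ (K : ℤ) ∣ x := by
  intro h
  have := Int.le_of_dvd h1 h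
  omega

set_option maxHeartbeats 1000000 in
theorem stmt13 (K r t L m : ℕ) (hr : 0 < r) (ht : 0 < t) (hL : 0 < L)
    (hm : 2 ≤ m) (hLrt : r * t ≤ L) (hK : K = m * (r * t) + (m - 1) * L) :
    ∀ s : ℤ, 1 ≤ s → s ≤ ((m : ℤ) - 1) * K →
      {jk : ℤ × ℤ | pos13 K r t L m s jk.1 jk.2}.ncard = r * t + L := by
  intro s hs1 hs2
  have hrt : 1 ≤ r * t := Nat.mul_pos hr ht
  have h2rt : 2 * (r * t) ≤ m * (r * t) := Nat.mul_le_mul_right _ hm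
  have hLm : 1 * L ≤ (m - 1) * L := Nat.mul_le_mul_right _ (by omega)
  have hK0 : 0 < K := by omega
  have hrtK : r * t ≤ K := by omega
  have hLK : L ≤ K := by omega
  have hKZ : (0:ℤ) < (K:ℤ) := by exact_mod_cast hK0
  -- the canonical decomposition
  set p : ℤ := (s - 1) / K with hp
  set q : ℤ := (s - 1) % K + 1 with hq
  have hdecomp : s = p * K + q := by
    have := Int.mul_ediv_add_emod (s - 1) K
    rw [hp, hq]; linarith [this]
  have hq1 : 1 ≤ q := by
    have := Int.emod_nonneg (s - 1) (ne_of_gt hKZ)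
    omega
  have hqK : q ≤ K := by
    have := Int.emod_lt_of_pos (s - 1) hKZ
    omega
  have hp0 : 0 ≤ p := Int.ediv_nonneg (by omega) (le_of_lt hKZ)
  have hpm : p ≤ (m:ℤ) - 2 := by
    have hlt : (s - 1) / K < (m:ℤ) - 1 := by
      rw [Int.ediv_lt_iff_lt_mul hKZ]
      linarith
    omega
  -- uniqueness of the decomposition
  have huniq : ∀ p' q' : ℤ, s = p' * K + q' → 1 ≤ q' → q' ≤ K → p' = p ∧ q' = q := by
    intro p' q' h1 h2 h3
    have h4 : (s - 1) / K = p' ∧ (s - 1) % K = q' - 1 := by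
      rw [Int.ediv_emod_unique hKZ]
      refine ⟨by linarith [h1], by omega, by omega⟩
    rw [hp, hq]
    omega
  -- cast of K
  have hKcast : (K:ℤ) = (m:ℤ) * ((r:ℤ) * t) + ((m:ℤ) - 1) * L := by
    have : ((m:ℕ) - 1 : ℕ) = (m : ℤ) - 1 := by push_cast [Nat.cast_sub (by omega : 1 ≤ m)]; ring
    rw [hK]; push_cast [Nat.cast_sub (by omega : 1 ≤ m)]; ring
  by_cases hpe : Even p
  · -- even case
    obtain ⟨e, he⟩ := hpe
    have hpdiv : p / 2 = e := by omega
    have hje : q ≠ cyc K (p / 2 * ((r : ℤ) * t + L) + (r : ℤ) * t + q) := by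
      intro h
      have h2 : cyc K q = cyc K (p / 2 * ((r : ℤ) * t + L) + (r : ℤ) * t + q) := by
        rw [cyc_self hq1 hqK]; exact h
      rw [cyc_eq_cyc_iff] at h2
      have h' : (K:ℤ) ∣ (p / 2 * ((r : ℤ) * t + L) + (r : ℤ) * t) := by
        rw [show q - (p / 2 * ((r : ℤ) * t + L) + (r : ℤ) * t + q)
          = -(p / 2 * ((r : ℤ) * t + L) + (r : ℤ) * t) from by ring] at h2
        exact (dvd_neg).mp h2
      rw [hpdiv] at h'
      have he2 : 2 * e ≤ (m:ℤ) - 2 := by omega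
      have he0 : 0 ≤ e := by omega
      have hrtZ : (1:ℤ) ≤ (r:ℤ) * t := by exact_mod_cast hrt
      have hLZ : (1:ℤ) ≤ (L:ℤ) := by exact_mod_cast hL
      refine not_dvd_of_pos_of_lt ?_ ?_ h'
      · nlinarith [mul_nonneg he0 (by linarith : (0:ℤ) ≤ (r:ℤ) * t + L)]
      · rw [hKcast]
        nlinarith [mul_nonneg (by linarith : (0:ℤ) ≤ (m:ℤ) - 2 - e)
          (by linarith : (0:ℤ) ≤ (r:ℤ) * t + L)]
    have hsets : {jk : ℤ × ℤ | pos13 K r t L m s jk.1 jk.2} =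
        {jk : ℤ × ℤ | (jk.1 = q ∧ ∃ i : ℤ, 1 ≤ i ∧ i ≤ ((L:ℕ):ℤ) ∧
            jk.2 = cyc K (p / 2 * ((r : ℤ) * t + L) + q + i)) ∨
          (jk.1 = cyc K (p / 2 * ((r : ℤ) * t + L) + (r : ℤ) * t + q) ∧
            ∃ i : ℤ, 1 ≤ i ∧ i ≤ ((r * t : ℕ):ℤ) ∧ jk.2 = cyc K (q - (r : ℤ) * t + i))} := by
      ext ⟨j, k⟩
      simp only [Set.mem_setOf_eq, pos13]
      constructor
      · rintro ⟨p', q', h1, h2, h3, h4, h5, h6⟩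
        obtain ⟨hp', hq'⟩ := huniq p' q' h1 h4 h5
        subst hp'; subst hq'
        rcases h6 with ⟨_, h⟩ | ⟨hodd, _⟩
        · push_cast
          exact h
        · exact absurd ⟨e, he⟩ hodd
      · intro h
        refine ⟨p, q, hdecomp, hp0, hpm, hq1, hqK, Or.inl ⟨⟨e, he⟩, ?_⟩⟩
        push_cast at h
        exact h
    rw [hsets, count_two K hK0 q (cyc K (p / 2 * ((r : ℤ) * t + L) + (r : ℤ) * t + q))
      (p / 2 * ((r : ℤ) * t + L) + q) (q - (r : ℤ) * t) L (r * t) hLK hrtK hje]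
    omega
  · -- odd case
    have hodd : Odd p := Int.not_even_iff_odd.mp hpe
    obtain ⟨e, he⟩ := hodd
    have he0 : 0 ≤ e := by omega
    have he2 : 2 * e + 1 ≤ (m:ℤ) - 2 := by omega
    have hpdiv1 : (p - 1) / 2 = e := by omega
    have hpdiv2 : (p + 1) / 2 = e + 1 := by omega
    have hrtZ : (1:ℤ) ≤ (r:ℤ) * t := by exact_mod_cast hrt
    have hLZ : (1:ℤ) ≤ (L:ℤ) := by exact_mod_cast hL
    have hje : q ≠ cyc K ((p + 1) / 2 * ((r : ℤ) * t + L) + q) := by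
      intro h
      have h2 : cyc K q = cyc K ((p + 1) / 2 * ((r : ℤ) * t + L) + q) := by
        rw [cyc_self hq1 hqK]; exact h
      rw [cyc_eq_cyc_iff] at h2
      have h' : (K:ℤ) ∣ ((p + 1) / 2 * ((r : ℤ) * t + L)) := by
        rw [show q - ((p + 1) / 2 * ((r : ℤ) * t + L) + q)
          = -((p + 1) / 2 * ((r : ℤ) * t + L)) from by ring] at h2
        exact (dvd_neg).mp h2
      rw [hpdiv2] at h'
      refine not_dvd_of_pos_of_lt ?_ ?_ h'
      · nlinarith [mul_pos (by linarith : (0:ℤ) < e + 1) (by linarith : (0:ℤ) < (r:ℤ) * t + L)]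
      · rw [hKcast]
        nlinarith [mul_nonneg (by linarith : (0:ℤ) ≤ (m:ℤ) - 1 - (e + 1))
          (by linarith : (0:ℤ) ≤ (r:ℤ) * t + L)]
    have hsets : {jk : ℤ × ℤ | pos13 K r t L m s jk.1 jk.2} =
        {jk : ℤ × ℤ | (jk.1 = q ∧ ∃ i : ℤ, 1 ≤ i ∧ i ≤ ((r * t : ℕ):ℤ) ∧
            jk.2 = cyc K ((p - 1) / 2 * ((r : ℤ) * t + L) + L + q + i)) ∨
          (jk.1 = cyc K ((p + 1) / 2 * ((r : ℤ) * t + L) + q) ∧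
            ∃ i : ℤ, 1 ≤ i ∧ i ≤ ((L:ℕ):ℤ) ∧ jk.2 = cyc K (q - (r : ℤ) * t + i))} := by
      ext ⟨j, k⟩
      simp only [Set.mem_setOf_eq, pos13]
      constructor
      · rintro ⟨p', q', h1, h2, h3, h4, h5, h6⟩
        obtain ⟨hp', hq'⟩ := huniq p' q' h1 h4 h5
        subst hp'; subst hq'
        rcases h6 with ⟨heven, _⟩ | ⟨_, h⟩
        · exact absurd heven hpe
        · push_cast
          exact h
      · intro h
        refine ⟨p, q, hdecomp, hp0, hpm, hq1, hqK, Or.inr ⟨hpe, ?_⟩⟩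
        push_cast at h
        exact h
    rw [hsets, count_two K hK0 q (cyc K ((p + 1) / 2 * ((r : ℤ) * t + L) + q))
      ((p - 1) / 2 * ((r : ℤ) * t + L) + L + q) (q - (r : ℤ) * t) (r * t) L hrtK hLK hje]
end

section
/- Let A be a (K', L', F', Z', S') EPDA in which every integer appears exactly g times (a g-regular EPDA). Construct D = [D'; D'_1; ...; D'_{r-1}] where D' equals the array obtained by repeating each column of A r times, and D'_i is obtained from D' by cyclically shifting its columns i positions and adding i·S' to every integer entry. Then D is an rF' × rK' array in which every integer of [rS'] appears exactly rg times, no integer appears twice within a column, and every column contains exactly rZ' stars. -/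
/-- A `(K, L, F, Z, S)` EPDA: an `F × K` array over `{star} ∪ [S]`
(`none` encodes the star). -/
def IsEPDA (K L F Z S : ℕ) (A : Fin F → Fin K → Option ℕ) : Prop :=
  (∀ j k s, A j k = some s → 1 ≤ s ∧ s ≤ S) ∧
  (∀ k, ({j : Fin F | A j k = none}).ncard = Z) ∧
  (∀ s, 1 ≤ s → s ≤ S → ∃ j k, A j k = some s) ∧
  (∀ k (j j' : Fin F) s, A j k = some s → A j' k = some s → j = j') ∧
  (∀ s (j : Fin F), (∃ k, A j k = some s) →
    ({k : Fin K | (∃ j', A j' k = some s) ∧ A j k ≠ none}).ncard ≤ L)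

private lemma shiftA {N i m : ℕ} (hi : i ≤ N) (hm : m < N) :
    ((m + i) % N + N - i) % N = m := by
  have h0 : 0 < N := Nat.lt_of_le_of_lt (Nat.zero_le _) hm
  have h2 : (m + i) % N + N - i = (m + i) % N + (N - i) := by
    have := Nat.mod_lt (m + i) h0; omega
  rw [h2, Nat.mod_add_mod]
  have h3 : m + i + (N - i) = m + N := by omega
  rw [h3, Nat.add_mod_right, Nat.mod_eq_of_lt hm]

private lemma shiftB {N i k : ℕ} (hi : i ≤ N) (hk : k < N) :
    ((k + N - i) % N + i) % N = k := by
  have h0 : 0 < N := Nat.lt_of_le_of_lt (Nat.zero_le _) hk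
  have h2 : k + N - i = k + (N - i) := by omega
  rw [h2, Nat.mod_add_mod]
  have h3 : k + (N - i) + i = k + N := by omega
  rw [h3, Nat.add_mod_right, Nat.mod_eq_of_lt hk]

private lemma rowdiv {F i j : ℕ} (hF : 0 < F) (hj : j < F) :
    (i * F + j) / F = i ∧ (i * F + j) % F = j := by
  constructor
  · rw [mul_comm, Nat.mul_add_div hF, Nat.div_eq_of_lt hj, add_zero]
  · rw [mul_comm, Nat.mul_add_mod, Nat.mod_eq_of_lt hj]

private lemma divuniq {i S s s₁ : ℕ} (h1 : 1 ≤ s₁) (h2 : s₁ ≤ S)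
    (he : s₁ + i * S = s) : (s - 1) / S = i := by
  have hA : i * S ≤ s - 1 := by omega
  have hB : s - 1 < (i + 1) * S := by rw [add_mul, one_mul]; omega
  exact Nat.div_eq_of_lt_le hA hB

private lemma rowlt {F i j r : ℕ} (hi : i < r) (hj : j < F) :
    i * F + j < r * F := by
  have h1 : (i + 1) * F ≤ r * F := Nat.mul_le_mul_right F hi
  rw [add_mul, one_mul] at h1
  omega

theorem stmt14 (K' L' F' Z' S' g r : ℕ) (hr : 0 < r) (hF' : 0 < F')
    (hK' : 0 < K')
    (A : Fin F' → Fin K' → Option ℕ) (hA : IsEPDA K' L' F' Z' S' A)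
    -- A is g-regular: every integer of [S'] appears exactly g times
    (hreg : ∀ s, 1 ≤ s → s ≤ S' →
      ({p : Fin F' × Fin K' | A p.1 p.2 = some s}).ncard = g)
    (D : Fin (r * F') → Fin (r * K') → Option ℕ)
    -- D = [D'; D'_1; ...; D'_{r-1}]: block i (rows iF'+1..(i+1)F') is the
    -- r-fold column repetition of A, with columns cyclically shifted i
    -- positions to the right and i·S' added to every integer entry
    (hD : ∀ j k, D j k =
      (A ⟨j.val % F', Nat.mod_lt _ hF'⟩
         ⟨((k.val + r * K' - j.val / F') % (r * K')) / r,
           Nat.div_lt_of_lt_mul (Nat.mod_lt _ (Nat.mul_pos hr hK'))⟩).map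
        (fun s => s + (j.val / F') * S')) :
    -- every integer of [rS'] appears exactly rg times
    (∀ s, 1 ≤ s → s ≤ r * S' →
      ({p : Fin (r * F') × Fin (r * K') | D p.1 p.2 = some s}).ncard = r * g) ∧
    -- no integer appears twice within a column
    (∀ k (j j' : Fin (r * F')) s, D j k = some s → D j' k = some s → j = j') ∧
    -- every column contains exactly rZ' stars
    (∀ k, ({j : Fin (r * F') | D j k = none}).ncard = r * Z') := by
  classical
  obtain ⟨h1, h2, h3, h4, h5⟩ := hA
  have hN0 : 0 < r * K' := Nat.mul_pos hr hK'
  have hrowdivlt : ∀ j : Fin (r * F'), j.val / F' < r := fun j =>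
    Nat.div_lt_of_lt_mul (lt_of_lt_of_le j.isLt (le_of_eq (mul_comm r F')))
  refine ⟨?_, ?_, ?_⟩
  · -- regularity
    intro s hs1 hs2
    have hS' : 0 < S' := by
      rcases Nat.eq_zero_or_pos S' with h | h
      · rw [h, mul_zero] at hs2; omega
      · exact h
    have hdm := Nat.div_add_mod (s - 1) S'
    have hmlt := Nat.mod_lt (s - 1) hS'
    set istar : ℕ := (s - 1) / S' with histar
    have hcm : istar * S' = S' * istar := mul_comm _ _
    have histarlt : istar < r := by
      rw [histar]
      apply Nat.div_lt_of_lt_mul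
      have hcm2 : r * S' = S' * r := mul_comm _ _
      omega
    set s0 : ℕ := s - istar * S' with hs0
    have hs01 : 1 ≤ s0 := by omega
    have hs02 : s0 ≤ S' := by omega
    have hsum : s0 + istar * S' = s := by omega
    have histarle : istar ≤ r * K' := by
      have : r ≤ r * K' := Nat.le_mul_of_pos_right r hK'
      omega
    -- key characterization
    have key : ∀ (j : Fin (r * F')) (k : Fin (r * K')),
        D j k = some s ↔ (j.val / F' = istar ∧
          A ⟨j.val % F', Nat.mod_lt _ hF'⟩
            ⟨((k.val + r * K' - istar) % (r * K')) / r,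
              Nat.div_lt_of_lt_mul (Nat.mod_lt _ hN0)⟩ = some s0) := by
      intro j k
      rw [hD, Option.map_eq_some_iff]
      constructor
      · rintro ⟨a, ha, hassum⟩
        obtain ⟨ha1, ha2⟩ := h1 _ _ _ ha
        have hid : (s - 1) / S' = j.val / F' := divuniq ha1 ha2 hassum
        have hji : j.val / F' = istar := by rw [histar, hid]
        refine ⟨hji, ?_⟩
        have hcol : (⟨((k.val + r * K' - istar) % (r * K')) / r,
              Nat.div_lt_of_lt_mul (Nat.mod_lt _ hN0)⟩ : Fin K') =
            ⟨((k.val + r * K' - j.val / F') % (r * K')) / r,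
              Nat.div_lt_of_lt_mul (Nat.mod_lt _ hN0)⟩ := by
          apply Fin.ext; simp only [hji]
        rw [hcol]
        have haeq : a = s0 := by
          have : a + istar * S' = s := by rw [← hji]; exact hassum
          omega
        rw [← haeq]; exact ha
      · rintro ⟨hji, hAeq⟩
        refine ⟨s0, ?_, by rw [hji]; omega⟩
        have hcol : (⟨((k.val + r * K' - j.val / F') % (r * K')) / r,
              Nat.div_lt_of_lt_mul (Nat.mod_lt _ hN0)⟩ : Fin K') =
            (⟨((k.val + r * K' - istar) % (r * K')) / r,
              Nat.div_lt_of_lt_mul (Nat.mod_lt _ hN0)⟩ : Fin K') := by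
          apply Fin.ext; simp only [hji]
        rw [hcol]; exact hAeq
    have hT : (Finset.univ.filter
        (fun q : Fin F' × Fin K' => A q.1 q.2 = some s0)).card = g := by
      have := hreg s0 hs01 hs02
      rwa [Set.ncard_eq_toFinset_card', Set.toFinset_setOf] at this
    rw [Set.ncard_eq_toFinset_card', Set.toFinset_setOf]
    rw [Finset.card_eq_sum_card_fiberwise
      (f := fun p : Fin (r * F') × Fin (r * K') =>
        (⟨((p.2.val + r * K' - istar) % (r * K')) % r, Nat.mod_lt _ hr⟩ : Fin r))
      (t := Finset.univ) (fun x _ => Finset.mem_univ _)]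
    have hfib : ∀ t : Fin r,
        ((Finset.univ.filter fun p : Fin (r * F') × Fin (r * K') =>
            D p.1 p.2 = some s).filter
          (fun p => (⟨((p.2.val + r * K' - istar) % (r * K')) % r,
              Nat.mod_lt _ hr⟩ : Fin r) = t)).card = g := by
      intro t
      rw [← hT]
      apply Finset.card_nbij'
        (i := fun p : Fin (r * F') × Fin (r * K') =>
          ((⟨p.1.val % F', Nat.mod_lt _ hF'⟩ : Fin F'),
           (⟨((p.2.val + r * K' - istar) % (r * K')) / r,
              Nat.div_lt_of_lt_mul (Nat.mod_lt _ hN0)⟩ : Fin K')))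
        (j := fun q : Fin F' × Fin K' =>
          ((⟨istar * F' + q.1.val, rowlt histarlt q.1.isLt⟩ : Fin (r * F')),
           (⟨(r * q.2.val + t.val + istar) % (r * K'),
              Nat.mod_lt _ hN0⟩ : Fin (r * K'))))
      · -- forward maps into T
        intro p hp
        simp only [Finset.mem_coe, Finset.mem_filter, Finset.mem_univ, true_and] at hp ⊢
        exact ((key p.1 p.2).mp hp.1).2
      · -- backward maps into fiber
        intro q hq
        simp only [Finset.mem_coe, Finset.mem_filter, Finset.mem_univ, true_and] at hq ⊢
        have hmlt' : r * q.2.val + t.val < r * K' := by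
          have h1' : (q.2.val + 1) * r ≤ K' * r := Nat.mul_le_mul_right r q.2.isLt
          rw [add_mul, one_mul] at h1'
          have hc1 : q.2.val * r = r * q.2.val := mul_comm _ _
          have hc2 : K' * r = r * K' := mul_comm _ _
          omega
        have hsig : ((r * q.2.val + t.val + istar) % (r * K') + r * K' - istar)
            % (r * K') = r * q.2.val + t.val := shiftA histarle hmlt'
        constructor
        · rw [key]
          constructor
          · exact (rowdiv hF' q.1.isLt).1
          · have hcol : (⟨(((r * q.2.val + t.val + istar) % (r * K')) + r * K' - istar)
                  % (r * K') / r, Nat.div_lt_of_lt_mul (Nat.mod_lt _ hN0)⟩ : Fin K')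
                = q.2 := by
              apply Fin.ext
              simp only [hsig]
              rw [Nat.mul_add_div hr, Nat.div_eq_of_lt t.isLt, add_zero]
            have hrow : (⟨(istar * F' + q.1.val) % F', Nat.mod_lt _ hF'⟩ : Fin F')
                = q.1 := Fin.ext (rowdiv hF' q.1.isLt).2
            rw [hrow, hcol]
            exact hq
        · apply Fin.ext
          simp only [hsig]
          rw [Nat.mul_add_mod, Nat.mod_eq_of_lt t.isLt]
      · -- left inverse
        intro p hp
        simp only [Finset.mem_coe, Finset.mem_filter, Finset.mem_univ, true_and] at hp
        obtain ⟨hp1, hp2⟩ := hp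
        have hji : p.1.val / F' = istar := ((key p.1 p.2).mp hp1).1
        have htv : ((p.2.val + r * K' - istar) % (r * K')) % r = t.val := by
          rw [← hp2]
        have hdivmod := Nat.div_add_mod ((p.2.val + r * K' - istar) % (r * K')) r
        ext
        · simp only
          have hda := Nat.div_add_mod p.1.val F'
          have hlink : istar * F' = F' * (p.1.val / F') := by
            rw [hji, mul_comm]
          omega
        · simp only [htv]
          have : r * ((p.2.val + r * K' - istar) % (r * K') / r) +
              (p.2.val + r * K' - istar) % (r * K') % r =
              (p.2.val + r * K' - istar) % (r * K') := hdivmod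
          rw [htv] at this
          rw [this]
          exact shiftB histarle p.2.isLt
      · -- right inverse
        intro q hq
        have hsigA : ((r * q.2.val + t.val + istar) % (r * K') + r * K' - istar)
            % (r * K') = r * q.2.val + t.val := by
          apply shiftA histarle
          have h1' : (q.2.val + 1) * r ≤ K' * r := Nat.mul_le_mul_right r q.2.isLt
          rw [add_mul, one_mul] at h1'
          have hc1 : q.2.val * r = r * q.2.val := mul_comm _ _
          have hc2 : K' * r = r * K' := mul_comm _ _
          omega
        ext
        · exact (rowdiv hF' q.1.isLt).2
        · simp only [hsigA]
          rw [Nat.mul_add_div hr, Nat.div_eq_of_lt t.isLt, add_zero]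
    rw [Finset.sum_congr rfl (fun t _ => hfib t)]
    rw [Finset.sum_const, Finset.card_univ, Fintype.card_fin, smul_eq_mul]
  · -- no repeats in a column
    intro k j j' s hj hj'
    rw [hD, Option.map_eq_some_iff] at hj hj'
    obtain ⟨a, ha, has⟩ := hj
    obtain ⟨a', ha', has'⟩ := hj'
    obtain ⟨ha1, ha2⟩ := h1 _ _ _ ha
    obtain ⟨ha1', ha2'⟩ := h1 _ _ _ ha'
    have hid : (s - 1) / S' = j.val / F' := divuniq ha1 ha2 has
    have hid' : (s - 1) / S' = j'.val / F' := divuniq ha1' ha2' has'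
    have hieq : j.val / F' = j'.val / F' := by omega
    have haa : a = a' := by
      rw [hieq] at has
      omega
    have hcol : (⟨((k.val + r * K' - j.val / F') % (r * K')) / r,
          Nat.div_lt_of_lt_mul (Nat.mod_lt _ hN0)⟩ : Fin K') =
        ⟨((k.val + r * K' - j'.val / F') % (r * K')) / r,
          Nat.div_lt_of_lt_mul (Nat.mod_lt _ hN0)⟩ := by
      apply Fin.ext; simp only [hieq]
    rw [hcol, haa] at ha
    have := h4 _ _ _ _ ha ha'
    have hmm : j.val % F' = j'.val % F' := congrArg Fin.val this
    apply Fin.ext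
    have e1 := Nat.div_add_mod j.val F'
    have e2 := Nat.div_add_mod j'.val F'
    have hlink : F' * (j.val / F') = F' * (j'.val / F') := by rw [hieq]
    omega
  · -- stars per column
    intro k
    rw [Set.ncard_eq_toFinset_card', Set.toFinset_setOf]
    rw [Finset.card_eq_sum_card_fiberwise
      (f := fun j : Fin (r * F') => (⟨j.val / F', hrowdivlt j⟩ : Fin r))
      (t := Finset.univ) (fun x _ => Finset.mem_univ _)]
    have hfib : ∀ i : Fin r,
        ((Finset.univ.filter fun j : Fin (r * F') => D j k = none).filter
          (fun j => (⟨j.val / F', hrowdivlt j⟩ : Fin r) = i)).card = Z' := by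
      intro i
      have hZ : (Finset.univ.filter (fun j₀ : Fin F' =>
          A j₀ ⟨((k.val + r * K' - i.val) % (r * K')) / r,
            Nat.div_lt_of_lt_mul (Nat.mod_lt _ hN0)⟩ = none)).card = Z' := by
        have := h2 ⟨((k.val + r * K' - i.val) % (r * K')) / r,
            Nat.div_lt_of_lt_mul (Nat.mod_lt _ hN0)⟩
        rwa [Set.ncard_eq_toFinset_card', Set.toFinset_setOf] at this
      rw [← hZ]
      apply Finset.card_nbij'
        (i := fun j : Fin (r * F') => (⟨j.val % F', Nat.mod_lt _ hF'⟩ : Fin F'))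
        (j := fun j₀ : Fin F' =>
          (⟨i.val * F' + j₀.val, rowlt i.isLt j₀.isLt⟩ : Fin (r * F')))
      · intro j hj
        simp only [Finset.mem_coe, Finset.mem_filter, Finset.mem_univ, true_and] at hj ⊢
        obtain ⟨hj1, hj2⟩ := hj
        rw [hD, Option.map_eq_none_iff] at hj1
        have hji : j.val / F' = i.val := by
          rw [Fin.ext_iff] at hj2; exact hj2
        have hcol : (⟨((k.val + r * K' - j.val / F') % (r * K')) / r,
              Nat.div_lt_of_lt_mul (Nat.mod_lt _ hN0)⟩ : Fin K') =
            ⟨((k.val + r * K' - i.val) % (r * K')) / r,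
              Nat.div_lt_of_lt_mul (Nat.mod_lt _ hN0)⟩ := by
          apply Fin.ext; simp only [hji]
        rwa [hcol] at hj1
      · intro j₀ hj₀
        simp only [Finset.mem_coe, Finset.mem_filter, Finset.mem_univ, true_and] at hj₀ ⊢
        constructor
        · rw [hD, Option.map_eq_none_iff]
          have hji : (i.val * F' + j₀.val) / F' = i.val := (rowdiv hF' j₀.isLt).1
          have hcol : (⟨((k.val + r * K' - (i.val * F' + j₀.val) / F') % (r * K')) / r,
                Nat.div_lt_of_lt_mul (Nat.mod_lt _ hN0)⟩ : Fin K') =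
              ⟨((k.val + r * K' - i.val) % (r * K')) / r,
                Nat.div_lt_of_lt_mul (Nat.mod_lt _ hN0)⟩ := by
            apply Fin.ext; simp only [hji]
          rw [hcol]
          have hrow : (⟨(i.val * F' + j₀.val) % F', Nat.mod_lt _ hF'⟩ : Fin F')
              = j₀ := Fin.ext (rowdiv hF' j₀.isLt).2
          rw [hrow]
          exact hj₀
        · exact Fin.ext (rowdiv hF' j₀.isLt).1
      · intro j hj
        simp only [Finset.mem_coe, Finset.mem_filter, Finset.mem_univ, true_and] at hj
        have hji : j.val / F' = i.val := by
          rw [Fin.ext_iff] at hj; exact hj.2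
        apply Fin.ext
        simp only
        have hda := Nat.div_add_mod j.val F'
        have hlink : i.val * F' = F' * (j.val / F') := by rw [hji, mul_comm]
        omega
      · intro j₀ hj₀
        exact Fin.ext (rowdiv hF' j₀.isLt).2
    rw [Finset.sum_congr rfl (fun i _ => hfib i)]
    rw [Finset.sum_const, Finset.card_univ, Fintype.card_fin, smul_eq_mul]
end

section
/- For positive integers K, r, t, L with K ≥ r(t+L), the total number of pairs (J, w_J), where J ⊆ [K] is an r-spread cyclic subset of size t+L and w_J consists of t cyclically consecutive elements of J, equals K · C(K - (r-1)(t+L) - 1, t+L - 1). -/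
namespace Stmt16

lemma one_le_cyc {K : ℕ} (hK : 0 < K) (a : ℤ) : 1 ≤ cyc K a := by
  have : (0:ℤ) ≤ (a - 1) % (K : ℤ) := Int.emod_nonneg _ (by exact_mod_cast hK.ne')
  unfold cyc; omega

lemma cyc_le {K : ℕ} (hK : 0 < K) (a : ℤ) : cyc K a ≤ K := by
  have : (a - 1) % (K : ℤ) < K := Int.emod_lt_of_pos _ (by exact_mod_cast hK)
  unfold cyc; omega

lemma cyc_congr {K : ℕ} {a b : ℤ} (h : a % K = b % K) : cyc K a = cyc K b := by
  unfold cyc; rw [Int.sub_emod, h, ← Int.sub_emod]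

lemma cyc_eq_self {K : ℕ} {a : ℤ} (h1 : 1 ≤ a) (h2 : a ≤ K) : cyc K a = a := by
  unfold cyc; rw [Int.emod_eq_of_lt (by omega) (by omega)]; ring

lemma cyc_emod {K : ℕ} (a : ℤ) : cyc K a % K = a % K := by
  unfold cyc
  conv_rhs => rw [show a = (a - 1) + 1 by ring]
  rw [Int.add_emod (a-1) 1, Int.add_emod ((a-1) % K) 1, Int.emod_emod_of_dvd _ dvd_rfl]

/-- recursion for antidiagonalTuple -/
lemma adt_succ (k n : ℕ) :
    Finset.Nat.antidiagonalTuple (k+1) n =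
      (Finset.HasAntidiagonal.antidiagonal n).biUnion
        (fun p => (Finset.Nat.antidiagonalTuple k p.2).image (Fin.cons p.1)) := by
  ext x
  simp only [Finset.Nat.mem_antidiagonalTuple, Finset.mem_biUnion, Finset.HasAntidiagonal.mem_antidiagonal,
    Finset.mem_image]
  constructor
  · intro hx
    refine ⟨(x 0, ∑ i : Fin k, Fin.tail x i), ?_, Fin.tail x, ?_, Fin.cons_self_tail x⟩
    · rw [← hx, Fin.sum_univ_succ]; rfl
    · rfl
  · rintro ⟨p, hp, y, hy, rfl⟩
    rw [Fin.sum_univ_succ]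
    simpa [hy] using hp

lemma card_adt : ∀ (k n : ℕ), (Finset.Nat.antidiagonalTuple (k+1) n).card = (n + k).choose n
  | 0, n => by simp [Finset.Nat.antidiagonalTuple_one]
  | (k+1), n => by
    rw [adt_succ (k+1) n, Finset.card_biUnion]
    · have : ∀ p ∈ Finset.HasAntidiagonal.antidiagonal n,
          ((Finset.Nat.antidiagonalTuple (k+1) p.2).image
            (Fin.cons (α := fun _ : Fin (k+2) => ℕ) p.1)).card
            = (p.2 + k).choose p.2 := by
        intro p _
        rw [Finset.card_image_of_injective _ (Fin.cons_right_injective (α := fun _ => ℕ) p.1),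
          card_adt k p.2]
      rw [Finset.sum_congr rfl this, Finset.Nat.antidiagonal_eq_map, Finset.sum_map]
      show ∑ i ∈ Finset.range (n+1), ((n - i) + k).choose (n - i) = _
      have hre : ∑ i ∈ Finset.range (n+1), ((n - i) + k).choose (n - i)
          = ∑ j ∈ Finset.range (n+1), (j + k).choose j := by
        rw [← Finset.sum_range_reflect (fun j => (j + k).choose j) (n+1)]
        apply Finset.sum_congr rfl
        intro j hj
        simp only [Finset.mem_range] at hj
        congr 1 <;> omega
      rw [hre]
      have h2 : ∀ j ∈ Finset.range (n+1), (j + k).choose j = (j+k).choose k := by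
        intro j _
        have hs := Nat.choose_symm (show j ≤ j + k by omega)
        rw [show j + k - j = k from by omega] at hs
        rw [← hs]
      rw [Finset.sum_congr rfl h2]
      have h3 : ∑ j ∈ Finset.range (n+1), (j+k).choose k
          = ∑ m ∈ Finset.Icc k (n+k), m.choose k := by
        rw [← Finset.Ico_add_one_right_eq_Icc, Finset.sum_Ico_eq_sum_range]
        apply Finset.sum_congr
        · congr 1; omega
        · intro j _; congr 1; omega
      rw [h3, Nat.sum_Icc_choose]
      have hs := Nat.choose_symm (show k + 1 ≤ n + k + 1 by omega)
      rw [show n + k + 1 - (k+1) = n from by omega] at hs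
      rw [← hs]; congr 1
    · rintro p hp q hq hpq
      simp only [Finset.disjoint_left, Finset.mem_image]
      rintro x ⟨y, hy, rfl⟩ ⟨z, hz, hzy⟩
      apply hpq
      simp only [Finset.mem_coe, Finset.HasAntidiagonal.mem_antidiagonal] at hp hq
      simp only [Finset.Nat.mem_antidiagonalTuple] at hy hz
      have h0 : p.1 = q.1 := by simpa using (congrFun hzy 0).symm
      have : Fin.tail (α := fun _ : Fin (k+2) => ℕ) (Fin.cons q.1 z)
          = Fin.tail (α := fun _ : Fin (k+2) => ℕ) (Fin.cons p.1 y) := by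
        rw [hzy]
      have h1 : z = y := by simpa [Fin.tail_cons] using this
      have : p.2 = q.2 := by omega
      exact Prod.ext h0.symm this.symm |>.symm


/-! ### partial sums and the element sequence -/

def gg (n : ℕ) (g : Fin n → ℕ) (k : ℕ) : ℕ := if h : k < n then g ⟨k, h⟩ else 0

def PS (n : ℕ) (g : Fin n → ℕ) (m : ℕ) : ℕ := ∑ k ∈ Finset.range m, gg n g k

def EE (K n : ℕ) (g : Fin n → ℕ) (a m : ℕ) : ℕ :=
  (cyc K ((a : ℤ) + (PS n g m : ℤ))).toNat

lemma PS_zero (n : ℕ) (g : Fin n → ℕ) : PS n g 0 = 0 := by simp [PS]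

lemma PS_add (n : ℕ) (g : Fin n → ℕ) {m m' : ℕ} (h : m ≤ m') :
    PS n g m' = PS n g m + ∑ k ∈ Finset.Ico m m', gg n g k := by
  rw [PS, PS, Finset.range_eq_Ico, Finset.range_eq_Ico]
  exact (Finset.sum_Ico_consecutive (gg n g) (Nat.zero_le m) h).symm

lemma PS_lower {n r : ℕ} {g : Fin n → ℕ} (hg1 : ∀ i, r ≤ g i) {m m' : ℕ}
    (hmm : m ≤ m') (hm' : m' ≤ n) : PS n g m + r * (m' - m) ≤ PS n g m' := by
  rw [PS_add n g hmm]
  have hb : ∀ k ∈ Finset.Ico m m', r ≤ gg n g k := by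
    intro k hk
    rw [Finset.mem_Ico] at hk
    rw [gg, dif_pos (lt_of_lt_of_le hk.2 hm')]
    exact hg1 _
  have := Finset.card_nsmul_le_sum (Finset.Ico m m') (gg n g) r hb
  rw [Nat.card_Ico, smul_eq_mul, Nat.mul_comm] at this
  exact Nat.add_le_add_left this _

lemma PS_n {K n : ℕ} {g : Fin n → ℕ} (hg2 : ∑ i, g i = K) : PS n g n = K := by
  rw [PS, ← Fin.sum_univ_eq_sum_range (gg n g) n, ← hg2]
  apply Finset.sum_congr rfl
  intro i _
  simp [gg]

lemma PS_upper {K r n : ℕ} {g : Fin n → ℕ} (hg1 : ∀ i, r ≤ g i) (hg2 : ∑ i, g i = K)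
    {m : ℕ} (hm : m ≤ n) : PS n g m + r * (n - m) ≤ K := by
  have := PS_lower hg1 hm (le_refl n)
  rw [PS_n hg2] at this
  exact this

lemma EE_low {K n : ℕ} {g : Fin n → ℕ} {a : ℕ} (hK : 0 < K) (ha1 : 1 ≤ a)
    {m : ℕ} (h : PS n g m ≤ K - a) (ha2 : a ≤ K) : EE K n g a m = a + PS n g m := by
  rw [EE, cyc_eq_self (by push_cast; omega) (by push_cast; omega)]
  push_cast
  omega

lemma EE_high {K n : ℕ} {g : Fin n → ℕ} {a : ℕ} (hK : 0 < K) (ha1 : 1 ≤ a) (ha2 : a ≤ K)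
    {m : ℕ} (h1 : K - a < PS n g m) (h2 : PS n g m ≤ K) :
    EE K n g a m = a + PS n g m - K := by
  rw [EE, cyc_congr (b := (a : ℤ) + PS n g m - K) (by rw [Int.sub_emod, Int.emod_self, sub_zero, Int.emod_emod]),
    cyc_eq_self (by push_cast; omega) (by push_cast; omega)]
  push_cast
  omega

lemma EE_pos {K n : ℕ} {g : Fin n → ℕ} {a m : ℕ} (hK : 0 < K) : 1 ≤ EE K n g a m := by
  have := one_le_cyc hK ((a : ℤ) + PS n g m)
  rw [EE]; omega

lemma EE_le {K n : ℕ} {g : Fin n → ℕ} {a m : ℕ} (hK : 0 < K) : EE K n g a m ≤ K := by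
  have h1 := one_le_cyc hK ((a : ℤ) + PS n g m)
  have h2 := cyc_le hK ((a : ℤ) + PS n g m)
  rw [EE]; omega

lemma EE_emod {K n : ℕ} {g : Fin n → ℕ} {a m : ℕ} (hK : 0 < K) :
    (EE K n g a m : ℤ) % K = ((a : ℤ) + PS n g m) % K := by
  rw [EE, Int.toNat_of_nonneg (by linarith [one_le_cyc hK ((a : ℤ) + PS n g m)]),
    cyc_emod]

lemma cyc_sub_EE {K n : ℕ} {g : Fin n → ℕ} {a : ℕ} (hK : 0 < K) (m m' : ℕ) :
    cyc K ((EE K n g a m' : ℤ) - EE K n g a m)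
      = cyc K ((PS n g m' : ℤ) - PS n g m) := by
  apply cyc_congr
  rw [Int.sub_emod, EE_emod hK, EE_emod hK, ← Int.sub_emod]
  congr 1
  ring

end Stmt16

namespace Stmt16

lemma D_bounds {K r n : ℕ} {g : Fin n → ℕ} (hr : 0 < r) (hg1 : ∀ i, r ≤ g i)
    (hg2 : ∑ i, g i = K) {m m' : ℕ} (hmm : m < m') (hm' : m' ≤ n) (hmn : 1 ≤ n - m' + m) :
    PS n g m + r ≤ PS n g m' ∧ PS n g m' + r ≤ PS n g m + K := by
  have h1 := PS_lower hg1 (le_of_lt hmm) hm'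
  have h2 := PS_lower hg1 (Nat.zero_le m) (le_trans (le_of_lt hmm) hm')
  have h3 := PS_upper hg1 hg2 hm'
  rw [PS_zero] at h2
  simp only [Nat.sub_zero] at h2
  have h4 : r * 1 ≤ r * (m' - m) := Nat.mul_le_mul_left r (by omega)
  have h5 : r * 1 ≤ r * (n - m' + m) := Nat.mul_le_mul_left r hmn
  have h6 : r * (n - m' + m) = r * (n - m') + r * m := by
    rw [← Nat.mul_add]
  omega

lemma cyc_neg {K : ℕ} (hK : 0 < K) {D : ℤ} (h1 : 1 ≤ D) (h2 : D ≤ K - 1) :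
    cyc K (-D) = K - D := by
  have : cyc K (-D) = cyc K ((K : ℤ) - D) := by
    apply cyc_congr
    rw [show (K:ℤ) - D = -D + K * 1 by ring, Int.add_mul_emod_self_left]
  rw [this, cyc_eq_self (by omega) (by omega)]

lemma cyc_zero {K : ℕ} (hK : 0 < K) : cyc K 0 = K := by
  have : cyc K 0 = cyc K (K : ℤ) := by
    apply cyc_congr
    simp
  rw [this, cyc_eq_self (by exact_mod_cast hK) le_rfl]

lemma EE_pair {K r n : ℕ} {g : Fin n → ℕ} {a : ℕ} (hK : 0 < K) (hr : 0 < r)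
    (hg1 : ∀ i, r ≤ g i) (hg2 : ∑ i, g i = K) {m m' : ℕ} (hmm : m < m') (hm' : m' < n) :
    ((r:ℤ) ≤ cyc K ((EE K n g a m' : ℤ) - EE K n g a m)) ∧
    ((r:ℤ) ≤ cyc K ((EE K n g a m : ℤ) - EE K n g a m')) ∧
    EE K n g a m ≠ EE K n g a m' := by
  obtain ⟨hb1, hb2⟩ := D_bounds hr hg1 hg2 hmm (le_of_lt hm') (by omega)
  have hKr : r * 1 ≤ r * n := Nat.mul_le_mul_left r (by omega)
  have hrK : r ≤ K := by
    have := PS_upper hg1 hg2 (Nat.zero_le n |>.trans (le_refl n))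
    omega
  set D : ℤ := (PS n g m' : ℤ) - PS n g m with hD
  have hD1 : (r : ℤ) ≤ D := by simp only [hD]; push_cast; omega
  have hD2 : D ≤ (K : ℤ) - r := by simp only [hD]; push_cast; omega
  have e1 : cyc K ((EE K n g a m' : ℤ) - EE K n g a m) = D := by
    rw [cyc_sub_EE hK, ← hD, cyc_eq_self (by omega) (by omega)]
  have e2 : cyc K ((EE K n g a m : ℤ) - EE K n g a m') = (K : ℤ) - D := by
    rw [cyc_sub_EE hK, show (PS n g m : ℤ) - PS n g m' = -D by rw [hD]; ring,
      cyc_neg hK (by omega) (by omega)]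
  refine ⟨by omega, by omega, ?_⟩
  intro hEq
  rw [hEq] at e1
  simp only [sub_self] at e1
  rw [cyc_zero hK] at e1
  omega

lemma mod_two_cases {n x : ℕ} (hx : x < 2 * n) :
    x % n = if x < n then x else x - n := by
  split
  · exact Nat.mod_eq_of_lt ‹_›
  · rw [Nat.mod_eq_sub_mod (by omega), Nat.mod_eq_of_lt (by omega)]

lemma mod_cancel {n c a b : ℕ} (ha : a < 2*n) (hb : b < n)
    (h : (c + a) % n = (c + b) % n) : a = b ∨ a = b + n := by
  have h1 : a % n = b % n := (Nat.ModEq.add_left_cancel' c h)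
  rw [Nat.mod_eq_of_lt hb] at h1
  rw [mod_two_cases ha] at h1
  split at h1 <;> omega

lemma sum_shift {M : Type*} [AddCommMonoid M] (f : ℕ → M) {n e : ℕ} (he : e ≤ n) :
    ∑ m ∈ Finset.range n, f ((e + m) % n) = ∑ m ∈ Finset.range n, f m := by
  rcases Nat.eq_zero_or_pos n with rfl | hn
  · simp
  have p1 : ∑ m ∈ Finset.range (n-e), f ((e + m) % n) = ∑ m ∈ Finset.Ico e n, f m := by
    rw [Finset.sum_Ico_eq_sum_range]
    apply Finset.sum_congr rfl
    intro m hm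
    rw [Finset.mem_range] at hm
    rw [Nat.mod_eq_of_lt (by omega)]
  have p2 : ∑ m ∈ Finset.Ico (n-e) n, f ((e + m) % n) = ∑ m ∈ Finset.range e, f m := by
    rw [Finset.sum_Ico_eq_sum_range]
    apply Finset.sum_congr (by congr 1; omega)
    intro m hm
    rw [Finset.mem_range] at hm
    have hx : (e + (n - e + m)) % n = m := by
      rw [Nat.mod_eq_sub_mod (by omega), show e + (n - e + m) - n = m from by omega,
        Nat.mod_eq_of_lt (by omega)]
    rw [hx]
  have split1 : ∑ m ∈ Finset.range n, f ((e + m) % n)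
      = ∑ m ∈ Finset.range (n-e), f ((e + m) % n) + ∑ m ∈ Finset.Ico (n-e) n, f ((e + m) % n) := by
    rw [Finset.range_eq_Ico,
      ← Finset.sum_Ico_consecutive _ (Nat.zero_le (n-e)) (by omega : n - e ≤ n),
      ← Finset.range_eq_Ico]
  have split2 : ∑ m ∈ Finset.range n, f m
      = ∑ m ∈ Finset.range e, f m + ∑ m ∈ Finset.Ico e n, f m := by
    rw [Finset.range_eq_Ico,
      ← Finset.sum_Ico_consecutive _ (Nat.zero_le e) he, ← Finset.range_eq_Ico]
  rw [split1, split2, p1, p2, add_comm]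

lemma window_start {n t i i' : ℕ} (ht : 0 < t) (htn : t < n) (hi : i < n) (hi' : i' < n)
    (hset : (Finset.range t).image (fun m => (i + m) % n) =
            (Finset.range t).image (fun m => (i' + m) % n)) : i = i' := by
  have hmemL : ∀ x m, m < t → (i + m) % n = x →
      ∃ m' < t, (i' + m') % n = x := by
    intro x m hm hx
    have : x ∈ (Finset.range t).image (fun m => (i' + m) % n) := by
      rw [← hset]
      exact Finset.mem_image.2 ⟨m, Finset.mem_range.2 hm, hx⟩
    obtain ⟨m', hm', hx'⟩ := Finset.mem_image.1 this
    exact ⟨m', Finset.mem_range.1 hm', hx'⟩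
  have hmemR : ∀ x m, m < t → (i' + m) % n = x →
      ∃ m' < t, (i + m') % n = x := by
    intro x m hm hx
    have : x ∈ (Finset.range t).image (fun m => (i + m) % n) := by
      rw [hset]
      exact Finset.mem_image.2 ⟨m, Finset.mem_range.2 hm, hx⟩
    obtain ⟨m', hm', hx'⟩ := Finset.mem_image.1 this
    exact ⟨m', Finset.mem_range.1 hm', hx'⟩
  obtain ⟨m, hm, him⟩ := hmemR i' 0 ht (by rw [Nat.add_zero, Nat.mod_eq_of_lt hi'])
  rcases Nat.eq_zero_or_pos m with rfl | hmpos
  · rw [Nat.add_zero, Nat.mod_eq_of_lt hi] at him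
    exact him
  · exfalso
    obtain ⟨m', hm', hx'⟩ := hmemL ((i + (m-1)) % n) (m-1) (by omega) rfl
    rw [← him, Nat.mod_add_mod] at hx'
    have : m + m' = m - 1 ∨ m + m' = m - 1 + n := by
      apply mod_cancel (c := i) (by omega) (by omega)
      rw [← Nat.add_assoc]
      exact hx'
    omega

lemma image_cancel {α β : Type*} [DecidableEq α] [DecidableEq β] {f : α → β} {s : Set α}
    {A B : Finset α} (hf : Set.InjOn f s) (hA : ↑A ⊆ s) (hB : ↑B ⊆ s)
    (h : A.image f = B.image f) : A = B := by
  have key : ∀ {A B : Finset α}, A.image f = B.image f → ↑A ⊆ s → ↑B ⊆ s → A ⊆ B := by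
    intro A B hAB hAs hBs x hx
    have : f x ∈ B.image f := by
      rw [← hAB]; exact Finset.mem_image_of_mem f hx
    obtain ⟨y, hy, hxy⟩ := Finset.mem_image.1 this
    rwa [← hf (hBs hy) (hAs hx) hxy]
  exact Finset.Subset.antisymm (key h hA hB) (key h.symm hB hA)

end Stmt16

namespace Stmt16

def m0 (K n : ℕ) (g : Fin n → ℕ) (a : ℕ) : ℕ :=
  if hx : ∃ m, m < n ∧ K - a < PS n g m then Nat.find hx else n

lemma PS_mono {n : ℕ} {g : Fin n → ℕ} : Monotone (PS n g) :=
  fun _ _ h => Finset.sum_le_sum_of_subset (Finset.range_subset_range.2 h)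

lemma m0_pos {K n : ℕ} {g : Fin n → ℕ} {a : ℕ} (hn : 0 < n) (ha2 : a ≤ K) :
    0 < m0 K n g a := by
  rw [m0]
  split
  · rename_i hx
    rcases Nat.eq_zero_or_pos (Nat.find hx) with h0 | hpos
    · exfalso
      have hs := Nat.find_spec hx
      rw [h0, PS_zero] at hs
      omega
    · exact hpos
  · exact hn

lemma m0_le {K n : ℕ} {g : Fin n → ℕ} {a : ℕ} : m0 K n g a ≤ n := by
  rw [m0]
  split
  · rename_i hx
    have hs := Nat.find_spec hx
    omega
  · exact le_rfl

lemma m0_iff {K n : ℕ} {g : Fin n → ℕ} {a : ℕ} :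
    ∀ m, m < n → (m < m0 K n g a ↔ PS n g m ≤ K - a) := by
  intro m hm
  rw [m0]
  split
  · rename_i hx
    constructor
    · intro hlt
      have hmin := Nat.find_min hx hlt
      by_contra hcon
      exact hmin ⟨hm, by omega⟩
    · intro hle
      by_contra hge
      push_neg at hge
      have hspec := Nat.find_spec hx
      have hmono := PS_mono (g := g) hge
      omega
  · rename_i hx
    push_neg at hx
    constructor
    · intro _
      have := hx m
      omega
    · intro _
      exact hm

lemma PS_strict {r n : ℕ} {g : Fin n → ℕ} (hr : 0 < r) (hg1 : ∀ i, r ≤ g i)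
    {u u' : ℕ} (h : u < u') (h' : u' ≤ n) : PS n g u < PS n g u' := by
  have := PS_lower hg1 (le_of_lt h) h'
  have h4 : r * 1 ≤ r * (u' - u) := Nat.mul_le_mul_left r (by omega)
  omega

lemma PS_le_sub_r {K r n : ℕ} {g : Fin n → ℕ} (hr : 0 < r) (hg1 : ∀ i, r ≤ g i)
    (hg2 : ∑ i, g i = K) {u : ℕ} (hu : u < n) : PS n g u + r ≤ K := by
  have := PS_upper hg1 hg2 (le_of_lt hu)
  have h4 : r * 1 ≤ r * (n - u) := Nat.mul_le_mul_left r (by omega)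
  omega

lemma EE_strictMono_shift {K r n : ℕ} {g : Fin n → ℕ} {a : ℕ} (hK : 0 < K) (hr : 0 < r)
    (hn : 0 < n) (hg1 : ∀ i, r ≤ g i) (hg2 : ∑ i, g i = K) (ha1 : 1 ≤ a) (ha2 : a ≤ K) :
    StrictMono (fun j : Fin n => EE K n g a (((j : ℕ) + m0 K n g a) % n)) := by
  intro j j' hjj
  set M := m0 K n g a with hM
  have hM1 : 0 < M := m0_pos hn ha2
  have hM2 : M ≤ n := m0_le
  simp only []
  have hjlt : (j : ℕ) < n := j.2
  have hj'lt : (j' : ℕ) < n := j'.2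
  have hjj' : (j : ℕ) < (j' : ℕ) := hjj
  -- value formulas
  have low : ∀ u, u < M → EE K n g a u = a + PS n g u := by
    intro u hu
    exact EE_low hK ha1 ((m0_iff (K := K) (g := g) (a := a) u (by omega)).1 hu) ha2
  have high : ∀ u, M ≤ u → u < n → EE K n g a u = a + PS n g u - K ∧ K < a + PS n g u := by
    intro u hu hun
    have h1 : K - a < PS n g u := by
      by_contra hcon
      have := (m0_iff (K := K) (g := g) (a := a) u hun).2 (by omega)
      omega
    have h2 : PS n g u + r ≤ K := PS_le_sub_r hr hg1 hg2 hun
    exact ⟨EE_high hK ha1 ha2 h1 (by omega), by omega⟩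
  rcases Nat.lt_or_ge (j' : ℕ) (n - M) with hc1 | hc1
  · -- both in high block
    have e1 := high ((j : ℕ) + M) (by omega) (by omega)
    have e2 := high ((j' : ℕ) + M) (by omega) (by omega)
    have hs : PS n g ((j : ℕ) + M) < PS n g ((j' : ℕ) + M) :=
      PS_strict hr hg1 (by omega) (by omega)
    rw [Nat.mod_eq_of_lt (by omega), Nat.mod_eq_of_lt (by omega)]
    omega
  rcases Nat.lt_or_ge (j : ℕ) (n - M) with hc2 | hc2
  · -- j high, j' low
    have e1 := high ((j : ℕ) + M) (by omega) (by omega)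
    have hub : PS n g ((j : ℕ) + M) + r ≤ K := PS_le_sub_r hr hg1 hg2 (by omega)
    have e2 := low ((j' : ℕ) + M - n) (by omega)
    rw [Nat.mod_eq_of_lt (by omega),
      mod_two_cases (by omega), if_neg (by omega)]
    omega
  · -- both low
    have e1 := low ((j : ℕ) + M - n) (by omega)
    have e2 := low ((j' : ℕ) + M - n) (by omega)
    have hs : PS n g ((j : ℕ) + M - n) < PS n g ((j' : ℕ) + M - n) :=
      PS_strict hr hg1 (by omega) (by omega)
    rw [mod_two_cases (by omega), if_neg (by omega),
      mod_two_cases (by omega), if_neg (by omega)]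
    omega

lemma orderEmb_EE {K r n : ℕ} {g : Fin n → ℕ} {a : ℕ} (hK : 0 < K) (hr : 0 < r)
    (hn : 0 < n) (hg1 : ∀ i, r ≤ g i) (hg2 : ∑ i, g i = K) (ha1 : 1 ≤ a) (ha2 : a ≤ K)
    {J : Finset ℕ} (hc : J.card = n)
    (hJ : ∀ j : Fin n, EE K n g a (((j : ℕ) + m0 K n g a) % n) ∈ J) :
    ∀ m, m < n → (J.orderEmbOfFin hc) ⟨((n - m0 K n g a) + m) % n, Nat.mod_lt _ hn⟩
      = EE K n g a m := by
  have huniq := Finset.orderEmbOfFin_unique hc hJ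
    (EE_strictMono_shift hK hr hn hg1 hg2 ha1 ha2)
  intro m hm
  rw [← congrFun huniq ⟨((n - m0 K n g a) + m) % n, Nat.mod_lt _ hn⟩]
  simp only []
  congr 1
  rw [Nat.mod_add_mod, show n - m0 K n g a + m + m0 K n g a = n + m from by
    have := m0_le (K := K) (n := n) (g := g) (a := a); omega,
    Nat.add_mod_left, Nat.mod_eq_of_lt hm]

end Stmt16

namespace Stmt16

def Jset (K n : ℕ) (g : Fin n → ℕ) (a : ℕ) : Finset ℕ :=
  Finset.image (fun m : Fin n => EE K n g a m) Finset.univ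

def Wset (K n t : ℕ) (g : Fin n → ℕ) (a : ℕ) : Finset ℕ :=
  Finset.image (fun m => EE K n g a m) (Finset.range t)

lemma EE_inj {K r n : ℕ} {g : Fin n → ℕ} {a : ℕ} (hK : 0 < K) (hr : 0 < r)
    (hg1 : ∀ i, r ≤ g i) (hg2 : ∑ i, g i = K) {m m' : ℕ} (hm : m < n) (hm' : m' < n)
    (h : EE K n g a m = EE K n g a m') : m = m' := by
  rcases lt_trichotomy m m' with hlt | heq | hgt
  · exact absurd h (EE_pair hK hr hg1 hg2 hlt hm').2.2
  · exact heq
  · exact absurd h.symm (EE_pair hK hr hg1 hg2 hgt hm).2.2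

lemma card_Jset {K r n : ℕ} {g : Fin n → ℕ} {a : ℕ} (hK : 0 < K) (hr : 0 < r)
    (hg1 : ∀ i, r ≤ g i) (hg2 : ∑ i, g i = K) : (Jset K n g a).card = n := by
  rw [Jset, Finset.card_image_of_injOn, Finset.card_univ, Fintype.card_fin]
  intro m _ m' _ h
  exact Fin.ext (EE_inj hK hr hg1 hg2 m.2 m'.2 h)

lemma mem_Jset {K n : ℕ} {g : Fin n → ℕ} {a x : ℕ} :
    x ∈ Jset K n g a ↔ ∃ m : Fin n, EE K n g a m = x := by
  simp [Jset]

lemma rSpread_Jset {K r n : ℕ} {g : Fin n → ℕ} {a : ℕ} (hK : 0 < K) (hr : 0 < r)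
    (hg1 : ∀ i, r ≤ g i) (hg2 : ∑ i, g i = K) : rSpread K r (Jset K n g a) := by
  constructor
  · intro x hx
    obtain ⟨m, hm⟩ := mem_Jset.1 hx
    rw [Finset.mem_Icc, ← hm]
    exact ⟨EE_pos hK, EE_le hK⟩
  · intro j hj j' hj' hne
    obtain ⟨m, hm⟩ := mem_Jset.1 hj
    obtain ⟨m', hm'⟩ := mem_Jset.1 hj'
    subst hm hm'
    have hmm : (m : ℕ) ≠ (m' : ℕ) := by
      intro hcon
      exact hne (by rw [show m = m' from Fin.ext hcon])
    rcases Nat.lt_or_ge (m : ℕ) (m' : ℕ) with hlt | hge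
    · obtain ⟨h1, h2, _⟩ := EE_pair (a := a) hK hr hg1 hg2 hlt m'.2
      exact ⟨h2, h1⟩
    · obtain ⟨h1, h2, _⟩ := EE_pair (a := a) hK hr hg1 hg2
        (show (m' : ℕ) < m from by omega) m.2
      exact ⟨h1, h2⟩

lemma hJmem {K n : ℕ} {g : Fin n → ℕ} {a : ℕ} (hn : 0 < n) :
    ∀ j : Fin n, EE K n g a (((j : ℕ) + m0 K n g a) % n) ∈ Jset K n g a := by
  intro j
  exact mem_Jset.2 ⟨⟨((j : ℕ) + m0 K n g a) % n, Nat.mod_lt _ hn⟩, rfl⟩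

/-- forward window identity -/
lemma Wset_eq {K r n t : ℕ} {g : Fin n → ℕ} {a : ℕ} (hK : 0 < K) (hr : 0 < r)
    (hn : 0 < n) (htn : t ≤ n) (hg1 : ∀ i, r ≤ g i) (hg2 : ∑ i, g i = K)
    (ha1 : 1 ≤ a) (ha2 : a ≤ K) (hc : (Jset K n g a).card = n) :
    Wset K n t g a = (Finset.range t).image
      (fun m => ((Jset K n g a).orderEmbOfFin hc)
        ⟨((n - m0 K n g a) + m) % n, Nat.mod_lt _ hn⟩) := by
  rw [Wset]
  apply Finset.image_congr
  intro m hm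
  rw [Finset.mem_coe, Finset.mem_range] at hm
  exact (orderEmb_EE hK hr hn hg1 hg2 ha1 ha2 hc (hJmem hn) m (by omega)).symm

end Stmt16

namespace Stmt16

lemma PS_succ (n : ℕ) (g : Fin n → ℕ) (m : ℕ) :
    PS n g (m+1) = PS n g m + gg n g m := Finset.sum_range_succ _ _

lemma reconstruct {K r n t : ℕ} (hK : 0 < K) (hr : 0 < r) (ht : 0 < t) (htn : t < n)
    (hn2 : 2 ≤ n) (hrn : r * n ≤ K) {J W : Finset ℕ} (hsp : rSpread K r J)
    (hc : J.card = n) {i : ℕ} (hi : i < n) (hn0 : 0 < n)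
    (hw : W = (Finset.range t).image
      (fun m => (J.orderEmbOfFin hc) ⟨(i + m) % n, Nat.mod_lt _ hn0⟩)) :
    ∃ (a : ℕ) (g : Fin n → ℕ), (1 ≤ a ∧ a ≤ K) ∧ (∀ j, r ≤ g j) ∧ (∑ j, g j = K) ∧
      Jset K n g a = J ∧ Wset K n t g a = W := by
  set σ : Fin n → ℕ := fun j => (J.orderEmbOfFin hc) j with hσ
  set idx : ℕ → Fin n := fun m => ⟨(i + m) % n, Nat.mod_lt _ hn0⟩ with hidx
  have σmem : ∀ j, σ j ∈ J := fun j => Finset.orderEmbOfFin_mem J hc j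
  have σIcc : ∀ j, 1 ≤ σ j ∧ σ j ≤ K := by
    intro j
    have := hsp.1 (σmem j)
    rw [Finset.mem_Icc] at this
    exact this
  have σinj : Function.Injective σ := (J.orderEmbOfFin hc).injective
  set d : ℕ → ℤ := fun m => (σ (idx (m+1)) : ℤ) - σ (idx m) with hd
  set g : Fin n → ℕ := fun m => (cyc K (d (m : ℕ))).toNat with hg
  have hidx_ne : ∀ m : ℕ, idx (m+1) ≠ idx m := by
    intro m hcon
    have hmod : (i + (m+1)) % n = (i + m) % n := congrArg Fin.val hcon
    have hdvd : n ∣ (i + (m+1)) - (i + m) :=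
      (Nat.modEq_iff_dvd' (by omega)).1 hmod.symm
    have : n ∣ 1 := by
      rwa [show i + (m+1) - (i+m) = 1 from by omega] at hdvd
    have := Nat.le_of_dvd (by omega) this
    omega
  have hσne : ∀ m : ℕ, σ (idx (m+1)) ≠ σ (idx m) := fun m hcon =>
    hidx_ne m (σinj hcon)
  have hdcyc : ∀ m : ℕ, (r : ℤ) ≤ cyc K (d m) ∧ cyc K (d m) ≤ K := by
    intro m
    have hne : (σ (idx (m+1)) : ℕ) ≠ σ (idx m) := hσne m
    have := hsp.2 _ (σmem (idx (m+1))) _ (σmem (idx m)) hne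
    exact ⟨this.1, cyc_le hK _⟩
  have hgval : ∀ m : Fin n, (g m : ℤ) = cyc K (d (m : ℕ)) := by
    intro m
    rw [hg]
    exact Int.toNat_of_nonneg (by linarith [one_le_cyc hK (d (m : ℕ))])
  have hgr : ∀ m : Fin n, r ≤ g m := by
    intro m
    have h1 := (hdcyc (m : ℕ)).1
    have h2 := hgval m
    omega
  -- the sum of gaps is K
  have hsum : ∑ j, g j = K := by
    have hcast : ((∑ j, g j : ℕ) : ℤ) = ∑ j : Fin n, (g j : ℤ) := by push_cast; rfl
    have hfin : ∑ j : Fin n, (g j : ℤ) = ∑ m ∈ Finset.range n, cyc K (d m) := by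
      rw [← Fin.sum_univ_eq_sum_range (fun m => cyc K (d m)) n]
      exact Finset.sum_congr rfl fun m _ => hgval m
    -- case formula for cyc of the gap
    have hcase : ∀ m : ℕ, cyc K (d m)
        = d m + K * (if (i + (m+1)) % n ≤ (i + m) % n then 1 else 0) := by
      intro m
      have hb1 := σIcc (idx (m+1))
      have hb2 := σIcc (idx m)
      have hle : (i + (m+1)) % n ≤ (i + m) % n ↔ σ (idx (m+1)) ≤ σ (idx m) := by
        rw [hσ]
        constructor
        · intro hle
          exact (J.orderEmbOfFin hc).le_iff_le.2 (by exact hle)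
        · intro hle
          exact (J.orderEmbOfFin hc).le_iff_le.1 hle
      split
      · rename_i hcond
        -- wrap : σ next ≤ σ cur, in fact <
        have hlt : σ (idx (m+1)) < σ (idx m) :=
          lt_of_le_of_ne (hle.1 hcond) (hσne m)
        have hdneg : d m ≤ -1 ∧ 1 - (K:ℤ) ≤ d m := by
          rw [hd]
          constructor <;> [skip; skip] <;> push_cast <;> omega
        have hshift : cyc K (d m) = cyc K (d m + K) := cyc_congr (by
          have h0 := Int.add_mul_emod_self_left (d m) (K:ℤ) 1
          simpa using h0.symm)
        rw [hshift, cyc_eq_self (by omega) (by omega)]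
        ring
      · rename_i hcond
        have hlt : σ (idx m) < σ (idx (m+1)) := by
          have := hσne m
          omega
        have hdpos : 1 ≤ d m ∧ d m ≤ (K:ℤ) - 1 := by
          rw [hd]
          constructor <;> push_cast <;> omega
        rw [cyc_eq_self (by omega) (by omega)]
        ring
    have hsplit : ∑ m ∈ Finset.range n, cyc K (d m)
        = (∑ m ∈ Finset.range n, d m)
          + (K:ℤ) * ∑ m ∈ Finset.range n,
              (if (i + (m+1)) % n ≤ (i + m) % n then (1:ℤ) else 0) := by
      rw [Finset.mul_sum, ← Finset.sum_add_distrib]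
      exact Finset.sum_congr rfl fun m _ => hcase m
    set F : ℕ → ℤ := fun x => if h : x < n then (σ ⟨x, h⟩ : ℤ) else 0 with hF
    have hFidx : ∀ m : ℕ, (σ (idx m) : ℤ) = F ((i + m) % n) := by
      intro m
      rw [hF]
      simp only []
      rw [dif_pos (Nat.mod_lt _ hn0)]
    have htel : ∑ m ∈ Finset.range n, d m = 0 := by
      have h1 : ∑ m ∈ Finset.range n, (σ (idx (m+1)) : ℤ)
          = ∑ m ∈ Finset.range n, F m := by
        have hpt : ∀ m : ℕ, (σ (idx (m+1)) : ℤ) = F (((i+1) + m) % n) := by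
          intro m
          rw [show (i+1) + m = i + (m+1) from by omega]
          exact hFidx (m+1)
        rw [Finset.sum_congr rfl fun m _ => hpt m]
        exact sum_shift F (by omega)
      have h2 : ∑ m ∈ Finset.range n, (σ (idx m) : ℤ)
          = ∑ m ∈ Finset.range n, F m := by
        rw [Finset.sum_congr rfl fun m _ => hFidx m]
        exact sum_shift F (by omega)
      simp only [hd]
      rw [Finset.sum_sub_distrib, h1, h2, sub_self]
    have hWc : ∑ m ∈ Finset.range n,
        (if (i + (m+1)) % n ≤ (i + m) % n then (1:ℤ) else 0) = 1 := by
      have hcong : ∀ m ∈ Finset.range n,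
          (if (i + (m+1)) % n ≤ (i + m) % n then (1:ℤ) else 0)
            = (if m = n - 1 - i then (1:ℤ) else 0) := by
        intro m hm
        rw [Finset.mem_range] at hm
        rw [mod_two_cases (by omega), mod_two_cases (x := i + m) (by omega)]
        split_ifs <;> omega
      rw [Finset.sum_congr rfl hcong,
        Finset.sum_ite_eq' (Finset.range n) (n - 1 - i) (fun _ => (1:ℤ)),
        if_pos (Finset.mem_range.2 (by omega))]
    rw [htel, hWc] at hsplit
    simp only [zero_add, mul_one] at hsplit
    omega
  set a : ℕ := σ (idx 0) with ha
  have haIcc := σIcc (idx 0)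
  have hEE : ∀ m, m < n → EE K n g a m = σ (idx m) := by
    intro m
    induction m with
    | zero =>
      intro _
      rw [EE, PS_zero]
      rw [show ((a:ℕ):ℤ) + ((0:ℕ):ℤ) = (a:ℤ) from by push_cast; ring,
        cyc_eq_self (by exact_mod_cast haIcc.1) (by exact_mod_cast haIcc.2),
        Int.toNat_natCast]
    | succ m IH =>
      intro hm1
      have hm : m < n := by omega
      have IH' := IH hm
      have e1 : ((a:ℤ) + PS n g m) % K = (σ (idx m) : ℤ) % K := by
        rw [← EE_emod hK (m := m), IH']
      have e2 : ((g ⟨m, hm⟩ : ℕ) : ℤ) % K = d m % K := by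
        rw [hgval ⟨m, hm⟩]
        exact cyc_emod _
      have hps : (PS n g (m+1) : ℤ) = (PS n g m : ℤ) + (g ⟨m, hm⟩ : ℕ) := by
        rw [PS_succ]
        push_cast
        congr 1
        rw [gg, dif_pos hm]
      have key : ((a:ℤ) + PS n g (m+1)) % K = (σ (idx (m+1)) : ℤ) % K := by
        rw [hps, show (a:ℤ) + ((PS n g m : ℤ) + (g ⟨m, hm⟩ : ℕ))
            = ((a:ℤ) + PS n g m) + (g ⟨m, hm⟩ : ℕ) from by ring,
          Int.add_emod, e1, e2, ← Int.add_emod]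
        congr 1
        simp only [hd]
        ring
      rw [EE, cyc_congr key,
        cyc_eq_self (by exact_mod_cast (σIcc (idx (m+1))).1)
          (by exact_mod_cast (σIcc (idx (m+1))).2),
        Int.toNat_natCast]
  refine ⟨a, g, ⟨haIcc.1, haIcc.2⟩, hgr, hsum, ?_, ?_⟩
  · apply Finset.eq_of_subset_of_card_le
    · intro x hx
      obtain ⟨m, hm⟩ := mem_Jset.1 hx
      rw [← hm, hEE (m : ℕ) m.2]
      exact σmem _
    · rw [card_Jset hK hr hgr hsum, hc]
  · rw [hw, Wset]
    apply Finset.image_congr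
    intro m hm
    rw [Finset.mem_coe, Finset.mem_range] at hm
    show EE K n g a m = (J.orderEmbOfFin hc) ⟨(i + m) % n, Nat.mod_lt _ hn0⟩
    rw [hEE m (by omega)]

end Stmt16

namespace Stmt16

lemma EE_zero {K n : ℕ} {g : Fin n → ℕ} {a : ℕ} (ha1 : 1 ≤ a) (ha2 : a ≤ K) :
    EE K n g a 0 = a := by
  rw [EE, PS_zero]
  rw [show ((a:ℕ):ℤ) + ((0:ℕ):ℤ) = (a:ℤ) from by push_cast; ring,
    cyc_eq_self (by exact_mod_cast ha1) (by exact_mod_cast ha2), Int.toNat_natCast]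

lemma PS_from_EE {K r n : ℕ} {g : Fin n → ℕ} {a : ℕ} (hK : 0 < K) (hr : 0 < r)
    (hg1 : ∀ i, r ≤ g i) (hg2 : ∑ i, g i = K) (ha1 : 1 ≤ a) (ha2 : a ≤ K)
    {m : ℕ} (hm : m < n) :
    PS n g m = if a ≤ EE K n g a m then EE K n g a m - a else EE K n g a m + K - a := by
  have hub := PS_le_sub_r hr hg1 hg2 hm
  by_cases hcase : PS n g m ≤ K - a
  · rw [EE_low hK ha1 hcase ha2, if_pos (by omega)]
    omega
  · rw [EE_high hK ha1 ha2 (by omega) (by omega), if_neg (by omega)]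
    omega

lemma orderEmb_transport {n : ℕ} (s₁ s₂ : Finset ℕ) (h12 : s₁ = s₂)
    (hc1 : s₁.card = n) (hc2 : s₂.card = n) (x : Fin n) :
    s₁.orderEmbOfFin hc1 x = s₂.orderEmbOfFin hc2 x := by
  subst h12
  rfl

lemma inj_phi {K r n t : ℕ} (hK : 0 < K) (hr : 0 < r) (ht : 0 < t) (htn : t < n)
    {a a' : ℕ} {g g' : Fin n → ℕ}
    (ha1 : 1 ≤ a) (ha2 : a ≤ K) (ha1' : 1 ≤ a') (ha2' : a' ≤ K)
    (hg1 : ∀ i, r ≤ g i) (hg2 : ∑ i, g i = K)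
    (hg1' : ∀ i, r ≤ g' i) (hg2' : ∑ i, g' i = K)
    (hJ : Jset K n g a = Jset K n g' a')
    (hW : Wset K n t g a = Wset K n t g' a') :
    a = a' ∧ g = g' := by
  have hn0 : 0 < n := by omega
  have hc : (Jset K n g a).card = n := card_Jset hK hr hg1 hg2
  have hc' : (Jset K n g' a').card = n := card_Jset hK hr hg1' hg2'
  set M := m0 K n g a with hM
  set M' := m0 K n g' a' with hM'
  have hM1 : 0 < M := m0_pos hn0 ha2
  have hM2 : M ≤ n := m0_le
  have hM1' : 0 < M' := m0_pos hn0 ha2'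
  have hM2' : M' ≤ n := m0_le
  set F : ℕ → ℕ := fun x =>
    if h : x < n then (Jset K n g a).orderEmbOfFin hc ⟨x, h⟩ else 0 with hF
  have hFinj : Set.InjOn F {x : ℕ | x < n} := by
    intro x hx y hy hxy
    rw [hF] at hxy
    dsimp only at hxy
    simp only [Set.mem_setOf_eq] at hx hy
    rw [dif_pos hx, dif_pos hy] at hxy
    have := ((Jset K n g a).orderEmbOfFin hc).injective hxy
    exact congrArg Fin.val this
  have hw1 : Wset K n t g a
      = ((Finset.range t).image (fun m => ((n - M) + m) % n)).image F := by
    rw [Wset_eq hK hr hn0 (by omega) hg1 hg2 ha1 ha2 hc, Finset.image_image]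
    apply Finset.image_congr
    intro m hm
    simp only [Function.comp_apply, hF]
    rw [dif_pos (Nat.mod_lt _ hn0)]
  have hw2 : Wset K n t g' a'
      = ((Finset.range t).image (fun m => ((n - M') + m) % n)).image F := by
    rw [Wset_eq hK hr hn0 (by omega) hg1' hg2' ha1' ha2' hc', Finset.image_image]
    apply Finset.image_congr
    intro m hm
    simp only [Function.comp_apply, hF]
    rw [dif_pos (Nat.mod_lt _ hn0)]
    exact orderEmb_transport _ _ hJ.symm hc' hc _
  have hidxeq : (Finset.range t).image (fun m => ((n - M) + m) % n)
      = (Finset.range t).image (fun m => ((n - M') + m) % n) := by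
    apply image_cancel hFinj ?_ ?_ (by rw [← hw1, ← hw2]; exact hW)
    · intro x hx
      simp only [Finset.coe_image, Set.mem_image] at hx
      obtain ⟨m, _, rfl⟩ := hx
      exact Nat.mod_lt _ hn0
    · intro x hx
      simp only [Finset.coe_image, Set.mem_image] at hx
      obtain ⟨m, _, rfl⟩ := hx
      exact Nat.mod_lt _ hn0
  have hii : n - M = n - M' :=
    window_start ht htn (by omega) (by omega) hidxeq
  have hMM : M = M' := by omega
  have hEEeq : ∀ m, m < n → EE K n g a m = EE K n g' a' m := by
    intro m hm
    have e1 := orderEmb_EE hK hr hn0 hg1 hg2 ha1 ha2 hc (hJmem hn0) m hm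
    have e2 := orderEmb_EE hK hr hn0 hg1' hg2' ha1' ha2' hc' (hJmem hn0) m hm
    rw [← e1, ← e2, ← hM, ← hM', ← hMM]
    exact orderEmb_transport _ _ hJ hc hc' _
  have haa : a = a' := by
    have := hEEeq 0 hn0
    rwa [EE_zero ha1 ha2, EE_zero ha1' ha2'] at this
  refine ⟨haa, ?_⟩
  have hPS : ∀ m, m ≤ n → PS n g m = PS n g' m := by
    intro m hm
    rcases Nat.lt_or_ge m n with hlt | hge
    · rw [PS_from_EE hK hr hg1 hg2 ha1 ha2 hlt,
        PS_from_EE hK hr hg1' hg2' ha1' ha2' hlt, hEEeq m hlt, haa]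
    · have hmn : m = n := by omega
      rw [hmn, PS_n hg2, PS_n hg2']
  funext m
  have s1 : PS n g ((m : ℕ)+1) = PS n g (m : ℕ) + g m := by
    rw [PS_succ, gg, dif_pos m.2, Fin.eta]
  have s2 : PS n g' ((m : ℕ)+1) = PS n g' (m : ℕ) + g' m := by
    rw [PS_succ, gg, dif_pos m.2, Fin.eta]
  have p1 := hPS (m : ℕ) (by omega)
  have p2 := hPS ((m : ℕ)+1) (by exact m.2)
  omega

end Stmt16

namespace Stmt16

theorem main_count {K r n t : ℕ} (hK : 0 < K) (hr : 0 < r) (ht : 0 < t) (htn : t < n)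
    (hn2 : 2 ≤ n) (hrn : r * n ≤ K) (hn0 : 0 < n) :
    {p : Finset ℕ × Finset ℕ | rSpread K r p.1 ∧ p.1.card = n ∧
      ∃ (hc : p.1.card = n) (i : ℕ), i < n ∧
        p.2 = (Finset.range t).image
          (fun m => ((p.1.orderIsoOfFin hc
            ⟨(i + m) % n, Nat.mod_lt _ hn0⟩ : {x // x ∈ p.1}) : ℕ))}.ncard
      = K * Nat.choose (K - (r - 1) * n - 1) (n - 1) := by
  classical
  set G : Finset (Fin n → ℕ) :=
    (Finset.Nat.antidiagonalTuple n (K - r*n)).image (fun q i => q i + r) with hG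
  set T' : Finset (ℕ × (Fin n → ℕ)) := (Finset.Icc 1 K) ×ˢ G with hT
  have hGmem : ∀ g : Fin n → ℕ, g ∈ G ↔ (∀ i, r ≤ g i) ∧ ∑ i, g i = K := by
    intro g
    rw [hG, Finset.mem_image]
    constructor
    · rintro ⟨q, hq, rfl⟩
      rw [Finset.Nat.mem_antidiagonalTuple] at hq
      constructor
      · intro i
        exact Nat.le_add_left r (q i)
      · show ∑ i : Fin n, (q i + r) = K
        rw [Finset.sum_add_distrib, hq, Finset.sum_const, Finset.card_univ,
          Fintype.card_fin, smul_eq_mul, Nat.mul_comm n r]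
        have h2 : 1*n ≤ r*n := Nat.mul_le_mul_right n hr
        omega
    · rintro ⟨h1, h2⟩
      refine ⟨fun i => g i - r, ?_, ?_⟩
      · rw [Finset.Nat.mem_antidiagonalTuple]
        have hsum : (∑ i : Fin n, (g i - r)) + r * n = K := by
          have hh : ∑ i : Fin n, (g i - r + r) = K := by
            have hpt : ∑ i : Fin n, (g i - r + r) = ∑ i : Fin n, g i :=
              Finset.sum_congr rfl (fun i _ => by have := h1 i; omega)
            rw [hpt, h2]
          rw [Finset.sum_add_distrib, Finset.sum_const, Finset.card_univ,
            Fintype.card_fin, smul_eq_mul, Nat.mul_comm n r] at hh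
          omega
        omega
      · funext i
        show g i - r + r = g i
        have := h1 i
        omega
  have hcardT : T'.card = K * Nat.choose (K - (r - 1) * n - 1) (n - 1) := by
    rw [hT, Finset.card_product, Nat.card_Icc]
    have hinj : Function.Injective (fun (q : Fin n → ℕ) (i : Fin n) => q i + r) := by
      intro q q' hqq
      funext i
      have := congrFun hqq i
      simp only [] at this
      omega
    have hcG : G.card = Nat.choose (K - (r-1)*n - 1) (n-1) := by
      rw [hG, Finset.card_image_of_injective _ hinj]
      have hadt := card_adt (n-1) (K - r*n)
      rw [show (n-1)+1 = n from by omega] at hadt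
      have hX : K - r*n + (n-1) = K - (r-1)*n - 1 := by
        have h1 : (r-1)*n = r*n - 1*n := by rw [Nat.sub_mul]
        have h2 : 1*n ≤ r*n := Nat.mul_le_mul_right n hr
        omega
      have hsymm := Nat.choose_symm (show K - r*n ≤ K - r*n + (n-1) by omega)
      rw [show K - r*n + (n-1) - (K - r*n) = n - 1 from by omega] at hsymm
      rw [hadt, ← hsymm, hX]
    rw [hcG]
    congr 1 <;> omega
  have hΦinj : Set.InjOn (fun p : ℕ × (Fin n → ℕ) =>
      (Jset K n p.2 p.1, Wset K n t p.2 p.1)) ↑T' := by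
    rintro ⟨a, g⟩ hag ⟨a', g'⟩ hag' heq
    rw [Finset.mem_coe, hT, Finset.mem_product, Finset.mem_Icc] at hag hag'
    obtain ⟨⟨ha1, ha2⟩, hgG⟩ := hag
    obtain ⟨⟨ha1', ha2'⟩, hgG'⟩ := hag'
    obtain ⟨hg1, hg2⟩ := (hGmem g).1 hgG
    obtain ⟨hg1', hg2'⟩ := (hGmem g').1 hgG'
    simp only [Prod.mk.injEq] at heq
    obtain ⟨haa, hgg⟩ := inj_phi hK hr ht htn ha1 ha2 ha1' ha2' hg1 hg2 hg1' hg2'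
      heq.1 heq.2
    exact Prod.ext haa hgg
  have hSeq : {p : Finset ℕ × Finset ℕ | rSpread K r p.1 ∧ p.1.card = n ∧
      ∃ (hc : p.1.card = n) (i : ℕ), i < n ∧
        p.2 = (Finset.range t).image
          (fun m => ((p.1.orderIsoOfFin hc
            ⟨(i + m) % n, Nat.mod_lt _ hn0⟩ : {x // x ∈ p.1}) : ℕ))}
      = ↑(T'.image (fun p : ℕ × (Fin n → ℕ) =>
          (Jset K n p.2 p.1, Wset K n t p.2 p.1))) := by
    ext p
    simp only [Set.mem_setOf_eq, Finset.coe_image, Set.mem_image, Finset.mem_coe]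
    constructor
    · rintro ⟨hsp, hcard, hc, i, hi, hw⟩
      have hw' : p.2 = (Finset.range t).image
          (fun m => (p.1.orderEmbOfFin hc) ⟨(i + m) % n, Nat.mod_lt _ hn0⟩) := by
        rw [hw]
        apply Finset.image_congr
        intro m _
        exact Finset.coe_orderIsoOfFin_apply _ _ _
      obtain ⟨a, g, ⟨ha1, ha2⟩, hg1, hg2, hJe, hWe⟩ :=
        reconstruct hK hr ht htn hn2 hrn hsp hc hi hn0 hw'
      refine ⟨(a, g), ?_, ?_⟩
      · rw [hT, Finset.mem_product, Finset.mem_Icc]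
        exact ⟨⟨ha1, ha2⟩, (hGmem g).2 ⟨hg1, hg2⟩⟩
      · show (Jset K n g a, Wset K n t g a) = p
        rw [hJe, hWe]
    · rintro ⟨⟨a, g⟩, hmem, rfl⟩
      rw [hT, Finset.mem_product, Finset.mem_Icc] at hmem
      obtain ⟨⟨ha1, ha2⟩, hgG⟩ := hmem
      obtain ⟨hg1, hg2⟩ := (hGmem g).1 hgG
      have hc : (Jset K n g a).card = n := card_Jset hK hr hg1 hg2
      have hM1 : 0 < m0 K n g a := m0_pos hn0 ha2
      have hM2 : m0 K n g a ≤ n := m0_le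
      refine ⟨rSpread_Jset hK hr hg1 hg2, hc, hc, n - m0 K n g a, by omega, ?_⟩
      show Wset K n t g a = _
      rw [Wset_eq hK hr hn0 (le_of_lt htn) hg1 hg2 ha1 ha2 hc]
      apply Finset.image_congr
      intro m _
      exact (Finset.coe_orderIsoOfFin_apply _ _ _).symm
  rw [hSeq, Set.ncard_coe_finset, Finset.card_image_of_injOn hΦinj, hcardT]

end Stmt16


theorem stmt16 (K r t L : ℕ) (hK : 0 < K) (hr : 0 < r) (ht : 0 < t) (hL : 0 < L)
    (h : r * (t + L) ≤ K) :
    {p : Finset ℕ × Finset ℕ | rSpread K r p.1 ∧ p.1.card = t + L ∧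
      ∃ (hc : p.1.card = t + L) (i : ℕ), i < t + L ∧
        p.2 = (Finset.range t).image
          (fun m => ((p.1.orderIsoOfFin hc
            ⟨(i + m) % (t + L), Nat.mod_lt _ (by omega)⟩ : {x // x ∈ p.1}) : ℕ))}.ncard
      = K * Nat.choose (K - (r - 1) * (t + L) - 1) (t + L - 1) := by
  exact Stmt16.main_count hK hr ht (by omega) (by omega) h (by omega)
end
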